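/- arXiv:2603.28954 — 9 statements merged into one kernel-verified Lean document; each statement's English description precedes it below -/
import Mathlib

section
/- There exists a constant C > 0 such that for every integer n ≥ 1 there is a propagation-complete CNF encoding of the constraint AMO'(x_1,...,x_n; z) using at most 2n + C·√n clauses and at most C·√n auxiliary variables. -/
/-- Variables are natural numbers. -/
abbrev Var : Type := ℕ

/-- A literal is a variable together with a polarity (`true` = positive). -/
abbrev Lit : Type := Var × Bool

/-- A clause is a finite set of literals. -/
abbrev Clause : Type := Finset Lit

/-- A CNF formula is a finite set of clauses; its size is its number of clauses. -/
abbrev CNF : Type := Finset Clause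

/-- Evaluation of a literal under a (total) assignment. -/
def Lit.eval (τ : Var → Bool) (l : Lit) : Bool :=
  if l.2 then τ l.1 else !(τ l.1)

/-- The negation of a literal. -/
def Lit.negate (l : Lit) : Lit := (l.1, !l.2)

/-- An assignment satisfies a clause if it makes at least one of its literals true. -/
def Clause.sat (τ : Var → Bool) (C : Clause) : Prop :=
  ∃ l ∈ C, Lit.eval τ l = true

/-- An assignment satisfies a CNF formula if it satisfies every clause. -/
def CNF.sat (τ : Var → Bool) (φ : CNF) : Prop :=
  ∀ C ∈ φ, Clause.sat τ C

/-- The set of variables occurring in a CNF formula. -/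
def CNF.vars (φ : CNF) : Finset Var :=
  φ.sup (fun C => C.image Prod.fst)

/-- The auxiliary variables of a formula whose input variables are `0, …, n-1`. -/
def CNF.auxVars (n : ℕ) (φ : CNF) : Finset Var :=
  CNF.vars φ \ Finset.range n

/-- `φ` encodes the Boolean function `f`, where the input variables `x_1, …, x_n`
are the variables `0, …, n-1`: for every assignment `τ` of the input variables,
`f τ = ⊤` iff `τ` extends to a total assignment satisfying `φ`. -/
def Encodes (n : ℕ) (f : (Fin n → Bool) → Bool) (φ : CNF) : Prop :=
  ∀ τ : Fin n → Bool,
    f τ = true ↔ ∃ σ : Var → Bool, (∀ i : Fin n, σ i.1 = τ i) ∧ CNF.sat σ φ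

/-- The at-most-`k` constraint on `n` Boolean inputs. -/
def AtMost (k n : ℕ) (τ : Fin n → Bool) : Bool :=
  decide ((Finset.univ.filter fun i : Fin n => τ i = true).card ≤ k)

/-- The at-most-one constraint on `n` Boolean inputs. -/
def AMO (n : ℕ) : (Fin n → Bool) → Bool := AtMost 1 n

/-- Unit propagation: `ℓ` is derivable from `φ` if some clause of `φ` contains `ℓ`
and the negations of all its other literals are derivable. (Unit clauses are the
base case.) -/
inductive UnitProp (φ : CNF) : Lit → Prop where
  | step (C : Clause) (hC : C ∈ φ) (l : Lit) (hl : l ∈ C)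
      (h : ∀ l' ∈ C, l' ≠ l → UnitProp φ (Lit.negate l')) : UnitProp φ l

/-- `φ ⊢₁ ⊥`: unit propagation derives a conflict (an empty clause). -/
def UnitRefutes (φ : CNF) : Prop :=
  ∃ C ∈ φ, ∀ l ∈ C, UnitProp φ (Lit.negate l)

/-- The formula `φ ∧ ℓ_1 ∧ ⋯ ∧ ℓ_m` obtained by adding the literals of `L`
as unit clauses. -/
def withUnits (φ : CNF) (L : List Lit) : CNF :=
  φ ∪ (L.map fun l => ({l} : Clause)).toFinset

/-- Propagation completeness of an encoding whose input variables are `0, …, n-1`: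
for all literals `ℓ_1, …, ℓ_{m-1}, ℓ_m` over the input variables, if
`φ ∧ ℓ_1 ∧ ⋯ ∧ ℓ_{m-1} ⊨ ℓ_m` then unit propagation from `φ ∧ ℓ_1 ∧ ⋯ ∧ ℓ_{m-1}`
derives `ℓ_m` or a conflict. -/
def PropagationComplete (n : ℕ) (φ : CNF) : Prop :=
  ∀ (L : List Lit) (l : Lit), (∀ l' ∈ L, l'.1 < n) → l.1 < n →
    (∀ σ : Var → Bool, CNF.sat σ (withUnits φ L) → Lit.eval σ l = true) →
    (UnitProp (withUnits φ L) l ∨ UnitRefutes (withUnits φ L))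

/-- The constraint `AMO'(x_1, …, x_n; z)` on `n+1` inputs: at most one of
`x_1, …, x_n` is true, and each `x_i` implies `z`. The inputs `x_1, …, x_n` are
the first `n` coordinates and `z` is the last one. -/
def AMOz (n : ℕ) (τ : Fin (n + 1) → Bool) : Bool :=
  AMO n (fun i => τ i.castSucc) &&
    decide (∀ i : Fin n, τ i.castSucc = true → τ (Fin.last n) = true)

namespace AMOEnc

def pos (v : ℕ) : Lit := (v, true)
def neg (v : ℕ) : Lit := (v, false)

@[simp] lemma negate_pos (v : ℕ) : (pos v).negate = neg v := rfl
@[simp] lemma negate_neg (v : ℕ) : (neg v).negate = pos v := rfl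
@[simp] lemma eval_pos (τ : Var → Bool) (v : ℕ) : Lit.eval τ (pos v) = τ v := rfl
@[simp] lemma eval_neg (τ : Var → Bool) (v : ℕ) : Lit.eval τ (neg v) = !(τ v) := rfl
@[simp] lemma pos_fst (v : ℕ) : (pos v).1 = v := rfl
@[simp] lemma neg_fst (v : ℕ) : (neg v).1 = v := rfl

lemma up_single {ψ : CNF} {a : Lit} (h : ({a} : Clause) ∈ ψ) : UnitProp ψ a := by
  refine .step _ h a (by simp) ?_
  intro l' hl' hne
  simp only [Finset.mem_singleton] at hl'
  exact absurd hl' hne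

lemma up_pair_right {ψ : CNF} {a b : Lit} (h : ({a, b} : Clause) ∈ ψ)
    (ha : UnitProp ψ a.negate) : UnitProp ψ b := by
  refine .step _ h b (by simp) ?_
  intro l' hl' hne
  have : l' = a ∨ l' = b := by simpa using hl'
  rcases this with rfl | rfl
  · exact ha
  · exact absurd rfl hne

lemma up_pair_left {ψ : CNF} {a b : Lit} (h : ({a, b} : Clause) ∈ ψ)
    (hb : UnitProp ψ b.negate) : UnitProp ψ a := by
  rw [Finset.pair_comm] at h
  exact up_pair_right h hb

lemma refute_single {ψ : CNF} {a : Lit} (h : ({a} : Clause) ∈ ψ)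
    (ha : UnitProp ψ a.negate) : UnitRefutes ψ := by
  refine ⟨{a}, h, ?_⟩
  intro l hl
  simp only [Finset.mem_singleton] at hl
  subst hl; exact ha

lemma refute_pair {ψ : CNF} {a b : Lit} (h : ({a, b} : Clause) ∈ ψ)
    (ha : UnitProp ψ a.negate) (hb : UnitProp ψ b.negate) : UnitRefutes ψ := by
  refine ⟨{a, b}, h, ?_⟩
  intro l hl
  have : l = a ∨ l = b := by simpa using hl
  rcases this with rfl | rfl
  · exact ha
  · exact hb

lemma sem_pair {σ : Var → Bool} {ψ : CNF} {a b : Lit} (hsat : CNF.sat σ ψ)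
    (h : ({a, b} : Clause) ∈ ψ) (ha : Lit.eval σ a = false) : Lit.eval σ b = true := by
  obtain ⟨l, hl, hev⟩ := hsat _ h
  have : l = a ∨ l = b := by simpa using hl
  rcases this with rfl | rfl
  · rw [hev] at ha; exact absurd ha (by simp)
  · exact hev

end AMOEnc
namespace AMOEnc

section Chain
variable {ψ : CNF} {R S : ℕ → ℕ} {P : ℕ}
  (hB1 : ∀ a, a < P → ({neg (R a), pos (S a)} : Clause) ∈ ψ)
  (hB2 : ∀ a, a + 1 < P → ({neg (S a), pos (S (a+1))} : Clause) ∈ ψ)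
  (hB3 : ∀ a, a + 1 < P → ({neg (S a), neg (R (a+1))} : Clause) ∈ ψ)

include hB1 in
lemma chain_s_of_r {a : ℕ} (ha : a < P) (h : UnitProp ψ (pos (R a))) :
    UnitProp ψ (pos (S a)) := by
  refine up_pair_right (hB1 a ha) ?_
  simpa using h

include hB2 in
lemma chain_up {a k : ℕ} (hak : a ≤ k) (hk : k < P) (h : UnitProp ψ (pos (S a))) :
    UnitProp ψ (pos (S k)) := by
  induction k with
  | zero => rwa [show a = 0 by omega] at h
  | succ m ih =>
    rcases Nat.eq_or_lt_of_le hak with heq | hlt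
    · rwa [heq] at h
    · have hm : a ≤ m := by omega
      have := ih hm (by omega)
      refine up_pair_right (hB2 m hk) ?_
      simpa using this

include hB2 in
lemma chain_down {a k : ℕ} (hka : k ≤ a) (ha : a < P) (h : UnitProp ψ (neg (S a))) :
    UnitProp ψ (neg (S k)) := by
  obtain ⟨d, hd⟩ : ∃ d, k + d = a := ⟨a - k, by omega⟩
  clear hka
  induction d generalizing k with
  | zero => rwa [show k = a by omega]
  | succ m ih =>
    have h1 : UnitProp ψ (neg (S (k+1))) := ih (by omega)
    refine up_pair_left (hB2 k (by omega)) ?_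
    simpa using h1

include hB1 hB2 hB3 in
lemma chain_neg_r {a b : ℕ} (ha : a < P) (hb : b < P) (hab : a ≠ b)
    (h : UnitProp ψ (pos (R a))) : UnitProp ψ (neg (R b)) := by
  have hs : UnitProp ψ (pos (S a)) := chain_s_of_r hB1 ha h
  rcases Nat.lt_or_ge a b with hlt | hge
  · -- b > a : use B3 at b-1
    have hb1 : (b - 1) + 1 < P := by omega
    have hcl := hB3 (b-1) hb1
    rw [show (b-1)+1 = b by omega] at hcl
    refine up_pair_right hcl ?_
    simpa using chain_up hB2 (show a ≤ b - 1 by omega) (by omega) hs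
  · have hlt : b < a := by omega
    -- derive neg (S (a-1)) from B3 at a-1, then chain down, then B1 at b
    have ha1 : (a - 1) + 1 < P := by omega
    have hcl := hB3 (a-1) ha1
    rw [show (a-1)+1 = a by omega] at hcl
    have hnsa : UnitProp ψ (neg (S (a-1))) := by
      refine up_pair_left hcl ?_
      simpa using h
    have hnsb : UnitProp ψ (neg (S b)) := chain_down hB2 (by omega) (by omega) hnsa
    refine up_pair_left (hB1 b hb) ?_
    simpa using hnsb

include hB1 hB2 hB3 in
lemma chain_refute {a b : ℕ} (hab : a < b) (hb : b < P)
    (h1 : UnitProp ψ (pos (R a))) (h2 : UnitProp ψ (pos (R b))) : UnitRefutes ψ := by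
  have hb1 : (b - 1) + 1 < P := by omega
  have hcl := hB3 (b-1) hb1
  rw [show (b-1)+1 = b by omega] at hcl
  refine refute_pair hcl ?_ ?_
  · simpa using chain_up hB2 (show a ≤ b - 1 by omega) (by omega)
      (chain_s_of_r hB1 (by omega) h1)
  · simpa using h2

include hB1 hB2 in
lemma chain_neg_r_of_neg_top {b : ℕ} (hb : b < P)
    (h : UnitProp ψ (neg (S (P-1)))) : UnitProp ψ (neg (R b)) := by
  have hnsb : UnitProp ψ (neg (S b)) := chain_down hB2 (by omega) (by omega) h
  refine up_pair_left (hB1 b hb) ?_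
  simpa using hnsb

-- semantic versions
variable {σ : Var → Bool} (hsat : CNF.sat σ ψ)

include hB1 hsat in
lemma sem_s_of_r {a : ℕ} (ha : a < P) (h : σ (R a) = true) : σ (S a) = true := by
  have := sem_pair hsat (hB1 a ha) (a := neg (R a)) (b := pos (S a)) (by simp [h])
  simpa using this

include hB2 hsat in
lemma sem_up {a k : ℕ} (hak : a ≤ k) (hk : k < P) (h : σ (S a) = true) :
    σ (S k) = true := by
  induction k with
  | zero => rwa [show a = 0 by omega] at h
  | succ m ih =>
    rcases Nat.eq_or_lt_of_le hak with heq | hlt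
    · rwa [heq] at h
    · have := ih (by omega) (by omega)
      have h2 := sem_pair hsat (hB2 m hk) (a := neg (S m)) (b := pos (S (m+1))) (by simp [this])
      simpa using h2

include hB1 hB2 hB3 hsat in
lemma sem_amo_rc {a b : ℕ} (ha : a < P) (hb : b < P) (hra : σ (R a) = true)
    (hrb : σ (R b) = true) : a = b := by
  by_contra hab
  wlog hlt : a < b generalizing a b
  · exact this hb ha hrb hra (Ne.symm hab) (by omega)
  have hs : σ (S (b-1)) = true :=
    sem_up hB2 hsat (show a ≤ b - 1 by omega) (by omega) (sem_s_of_r hB1 hsat ha hra)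
  have hcl := hB3 (b-1) (by omega)
  rw [show (b-1)+1 = b by omega] at hcl
  have := sem_pair hsat hcl (a := neg (S (b-1))) (b := neg (R b)) (by simp [hs])
  simp [hrb] at this

end Chain
end AMOEnc
namespace AMOEnc

variable (n : ℕ)

def P : ℕ := n.sqrt + 1
def rv (a : ℕ) : ℕ := n + 1 + a
def cv (j : ℕ) : ℕ := n + 1 + P n + j
def sv (a : ℕ) : ℕ := n + 1 + 2 * P n + a
def tv (j : ℕ) : ℕ := n + 1 + 3 * P n + j

lemma P_pos : 0 < P n := Nat.succ_pos _
lemma lt_P_sq : n < P n * P n := by have := Nat.lt_succ_sqrt' n; simpa [P, pow_two] using this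
lemma div_lt_P {i : ℕ} (hi : i < n) : i / P n < P n :=
  Nat.div_lt_iff_lt_mul (P_pos n) |>.mpr (lt_of_lt_of_le hi (le_of_lt (lt_P_sq n)))
lemma mod_lt_P (i : ℕ) : i % P n < P n := Nat.mod_lt _ (P_pos n)

def clauseList : List Clause :=
  ((List.range n).map fun i => ({neg i, pos (rv n (i / P n))} : Clause)) ++
  ((List.range n).map fun i => ({neg i, pos (cv n (i % P n))} : Clause)) ++
  ((List.range (P n)).map fun a => ({neg (rv n a), pos (sv n a)} : Clause)) ++
  ((List.range (P n - 1)).map fun a => ({neg (sv n a), pos (sv n (a+1))} : Clause)) ++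
  ((List.range (P n - 1)).map fun a => ({neg (sv n a), neg (rv n (a+1))} : Clause)) ++
  ((List.range (P n)).map fun j => ({neg (cv n j), pos (tv n j)} : Clause)) ++
  ((List.range (P n - 1)).map fun j => ({neg (tv n j), pos (tv n (j+1))} : Clause)) ++
  ((List.range (P n - 1)).map fun j => ({neg (tv n j), neg (cv n (j+1))} : Clause)) ++
  [({neg (tv n (P n - 1)), pos n} : Clause)]

def phi : CNF := (clauseList n).toFinset

lemma mem_phi_iff {C : Clause} : C ∈ phi n ↔ C ∈ clauseList n := List.mem_toFinset

lemma memA1 {i : ℕ} (hi : i < n) : ({neg i, pos (rv n (i / P n))} : Clause) ∈ phi n := by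
  rw [mem_phi_iff]; unfold clauseList
  simp only [List.mem_append, List.mem_map, List.mem_range, List.mem_singleton]
  exact Or.inl <| Or.inl <| Or.inl <| Or.inl <| Or.inl <| Or.inl <| Or.inl <| Or.inl ⟨i, hi, rfl⟩

lemma memA2 {i : ℕ} (hi : i < n) : ({neg i, pos (cv n (i % P n))} : Clause) ∈ phi n := by
  rw [mem_phi_iff]; unfold clauseList
  simp only [List.mem_append, List.mem_map, List.mem_range, List.mem_singleton]
  exact Or.inl <| Or.inl <| Or.inl <| Or.inl <| Or.inl <| Or.inl <| Or.inl <| Or.inr ⟨i, hi, rfl⟩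

lemma memB1 {a : ℕ} (ha : a < P n) : ({neg (rv n a), pos (sv n a)} : Clause) ∈ phi n := by
  rw [mem_phi_iff]; unfold clauseList
  simp only [List.mem_append, List.mem_map, List.mem_range, List.mem_singleton]
  exact Or.inl <| Or.inl <| Or.inl <| Or.inl <| Or.inl <| Or.inl <| Or.inr ⟨a, ha, rfl⟩

lemma memB2 {a : ℕ} (ha : a + 1 < P n) :
    ({neg (sv n a), pos (sv n (a+1))} : Clause) ∈ phi n := by
  rw [mem_phi_iff]; unfold clauseList
  simp only [List.mem_append, List.mem_map, List.mem_range, List.mem_singleton]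
  exact Or.inl <| Or.inl <| Or.inl <| Or.inl <| Or.inl <| Or.inr ⟨a, by omega, rfl⟩

lemma memB3 {a : ℕ} (ha : a + 1 < P n) :
    ({neg (sv n a), neg (rv n (a+1))} : Clause) ∈ phi n := by
  rw [mem_phi_iff]; unfold clauseList
  simp only [List.mem_append, List.mem_map, List.mem_range, List.mem_singleton]
  exact Or.inl <| Or.inl <| Or.inl <| Or.inl <| Or.inr ⟨a, by omega, rfl⟩

lemma memC1 {j : ℕ} (hj : j < P n) : ({neg (cv n j), pos (tv n j)} : Clause) ∈ phi n := by
  rw [mem_phi_iff]; unfold clauseList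
  simp only [List.mem_append, List.mem_map, List.mem_range, List.mem_singleton]
  exact Or.inl <| Or.inl <| Or.inl <| Or.inr ⟨j, hj, rfl⟩

lemma memC2 {j : ℕ} (hj : j + 1 < P n) :
    ({neg (tv n j), pos (tv n (j+1))} : Clause) ∈ phi n := by
  rw [mem_phi_iff]; unfold clauseList
  simp only [List.mem_append, List.mem_map, List.mem_range, List.mem_singleton]
  exact Or.inl <| Or.inl <| Or.inr ⟨j, by omega, rfl⟩

lemma memC3 {j : ℕ} (hj : j + 1 < P n) :
    ({neg (tv n j), neg (cv n (j+1))} : Clause) ∈ phi n := by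
  rw [mem_phi_iff]; unfold clauseList
  simp only [List.mem_append, List.mem_map, List.mem_range, List.mem_singleton]
  exact Or.inl <| Or.inr ⟨j, by omega, rfl⟩

lemma memD : ({neg (tv n (P n - 1)), pos n} : Clause) ∈ phi n := by
  rw [mem_phi_iff]; unfold clauseList
  simp only [List.mem_append, List.mem_map, List.mem_range, List.mem_singleton]
  exact Or.inr trivial

end AMOEnc
namespace AMOEnc
open Classical

variable (n : ℕ)

noncomputable def sigma (τ : ℕ → Bool) : Var → Bool := fun v =>
  if v ≤ n then τ v
  else if v < n+1+P n then decide (∃ i, i < n ∧ τ i = true ∧ i / P n = v - (n+1))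
  else if v < n+1+2*P n then decide (∃ i, i < n ∧ τ i = true ∧ i % P n = v - (n+1+P n))
  else if v < n+1+3*P n then decide (∃ i, i < n ∧ τ i = true ∧ i / P n ≤ v - (n+1+2*P n))
  else decide (∃ i, i < n ∧ τ i = true ∧ i % P n ≤ v - (n+1+3*P n))

variable {τ : ℕ → Bool}

lemma sigma_x {v : ℕ} (hv : v ≤ n) : sigma n τ v = τ v := by
  unfold sigma; rw [if_pos hv]

lemma sigma_r {a : ℕ} (ha : a < P n) :
    sigma n τ (rv n a) = decide (∃ i, i < n ∧ τ i = true ∧ i / P n = a) := by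
  have h1 : ¬ (rv n a ≤ n) := by unfold rv; omega
  have h2 : rv n a < n+1+P n := by unfold rv; omega
  unfold sigma
  rw [if_neg h1, if_pos h2, show rv n a - (n+1) = a from by unfold rv; omega]

lemma sigma_c {j : ℕ} (hj : j < P n) :
    sigma n τ (cv n j) = decide (∃ i, i < n ∧ τ i = true ∧ i % P n = j) := by
  have h1 : ¬ (cv n j ≤ n) := by unfold cv; omega
  have h2 : ¬ (cv n j < n+1+P n) := by unfold cv; omega
  have h3 : cv n j < n+1+2*P n := by unfold cv; omega
  unfold sigma
  rw [if_neg h1, if_neg h2, if_pos h3,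
    show cv n j - (n+1+P n) = j from by unfold cv; omega]

lemma sigma_s {a : ℕ} (ha : a < P n) :
    sigma n τ (sv n a) = decide (∃ i, i < n ∧ τ i = true ∧ i / P n ≤ a) := by
  have h1 : ¬ (sv n a ≤ n) := by unfold sv; omega
  have h2 : ¬ (sv n a < n+1+P n) := by unfold sv; omega
  have h3 : ¬ (sv n a < n+1+2*P n) := by unfold sv; omega
  have h4 : sv n a < n+1+3*P n := by unfold sv; omega
  unfold sigma
  rw [if_neg h1, if_neg h2, if_neg h3, if_pos h4,
    show sv n a - (n+1+2*P n) = a from by unfold sv; omega]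

lemma sigma_t {j : ℕ} (hj : j < P n) :
    sigma n τ (tv n j) = decide (∃ i, i < n ∧ τ i = true ∧ i % P n ≤ j) := by
  have h1 : ¬ (tv n j ≤ n) := by unfold tv; omega
  have h2 : ¬ (tv n j < n+1+P n) := by unfold tv; omega
  have h3 : ¬ (tv n j < n+1+2*P n) := by unfold tv; omega
  have h4 : ¬ (tv n j < n+1+3*P n) := by unfold tv; omega
  unfold sigma
  rw [if_neg h1, if_neg h2, if_neg h3, if_neg h4,
    show tv n j - (n+1+3*P n) = j from by unfold tv; omega]

lemma sigma_sat
    (hamo : ∀ i j, i < n → j < n → τ i = true → τ j = true → i = j)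
    (himp : ∀ i, i < n → τ i = true → τ n = true) :
    CNF.sat (sigma n τ) (phi n) := by
  intro C hC
  rw [mem_phi_iff] at hC
  unfold clauseList at hC
  simp only [List.mem_append, List.mem_map, List.mem_range, List.mem_singleton] at hC
  rcases hC with ((((((((⟨i,hi,rfl⟩|⟨i,hi,rfl⟩)|⟨a,ha,rfl⟩)|⟨a,ha,rfl⟩)|⟨a,ha,rfl⟩)|
      ⟨j,hj,rfl⟩)|⟨j,hj,rfl⟩)|⟨j,hj,rfl⟩)|rfl)
  · -- A1
    rcases Bool.eq_false_or_eq_true (τ i) with hτ | hτ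
    · refine ⟨pos (rv n (i / P n)), by simp, ?_⟩
      rw [eval_pos, sigma_r n (div_lt_P n hi)]
      simp only [decide_eq_true_eq]
      exact ⟨i, hi, hτ, rfl⟩
    · exact ⟨neg i, by simp, by rw [eval_neg, sigma_x n (by omega), hτ]; rfl⟩
  · -- A2
    rcases Bool.eq_false_or_eq_true (τ i) with hτ | hτ
    · refine ⟨pos (cv n (i % P n)), by simp, ?_⟩
      rw [eval_pos, sigma_c n (mod_lt_P n i)]
      simp only [decide_eq_true_eq]
      exact ⟨i, hi, hτ, rfl⟩
    · exact ⟨neg i, by simp, by rw [eval_neg, sigma_x n (by omega), hτ]; rfl⟩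
  · -- B1
    by_cases hR : ∃ i, i < n ∧ τ i = true ∧ i / P n = a
    · refine ⟨pos (sv n a), by simp, ?_⟩
      rw [eval_pos, sigma_s n ha]
      simp only [decide_eq_true_eq]
      obtain ⟨i, h1, h2, h3⟩ := hR
      exact ⟨i, h1, h2, le_of_eq h3⟩
    · refine ⟨neg (rv n a), by simp, ?_⟩
      rw [eval_neg, sigma_r n ha]
      simp [hR]
  · -- B2
    by_cases hS : ∃ i, i < n ∧ τ i = true ∧ i / P n ≤ a
    · refine ⟨pos (sv n (a+1)), by simp, ?_⟩
      rw [eval_pos, sigma_s n (by omega)]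
      simp only [decide_eq_true_eq]
      obtain ⟨i, h1, h2, h3⟩ := hS
      exact ⟨i, h1, h2, by omega⟩
    · refine ⟨neg (sv n a), by simp, ?_⟩
      rw [eval_neg, sigma_s n (by omega)]
      simp [hS]
  · -- B3
    by_cases hS : ∃ i, i < n ∧ τ i = true ∧ i / P n ≤ a
    · refine ⟨neg (rv n (a+1)), by simp, ?_⟩
      rw [eval_neg, sigma_r n (by omega)]
      have : ¬ ∃ i, i < n ∧ τ i = true ∧ i / P n = a + 1 := by
        rintro ⟨i', h1', h2', h3'⟩
        obtain ⟨i, h1, h2, h3⟩ := hS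
        have hii : i = i' := hamo i i' h1 h1' h2 h2'
        rw [hii] at h3
        omega
      simp [this]
    · refine ⟨neg (sv n a), by simp, ?_⟩
      rw [eval_neg, sigma_s n (by omega)]
      simp [hS]
  · -- C1
    by_cases hR : ∃ i, i < n ∧ τ i = true ∧ i % P n = j
    · refine ⟨pos (tv n j), by simp, ?_⟩
      rw [eval_pos, sigma_t n hj]
      simp only [decide_eq_true_eq]
      obtain ⟨i, h1, h2, h3⟩ := hR
      exact ⟨i, h1, h2, le_of_eq h3⟩
    · refine ⟨neg (cv n j), by simp, ?_⟩
      rw [eval_neg, sigma_c n hj]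
      simp [hR]
  · -- C2
    by_cases hS : ∃ i, i < n ∧ τ i = true ∧ i % P n ≤ j
    · refine ⟨pos (tv n (j+1)), by simp, ?_⟩
      rw [eval_pos, sigma_t n (by omega)]
      simp only [decide_eq_true_eq]
      obtain ⟨i, h1, h2, h3⟩ := hS
      exact ⟨i, h1, h2, by omega⟩
    · refine ⟨neg (tv n j), by simp, ?_⟩
      rw [eval_neg, sigma_t n (by omega)]
      simp [hS]
  · -- C3
    by_cases hS : ∃ i, i < n ∧ τ i = true ∧ i % P n ≤ j
    · refine ⟨neg (cv n (j+1)), by simp, ?_⟩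
      rw [eval_neg, sigma_c n (by omega)]
      have : ¬ ∃ i, i < n ∧ τ i = true ∧ i % P n = j + 1 := by
        rintro ⟨i', h1', h2', h3'⟩
        obtain ⟨i, h1, h2, h3⟩ := hS
        have hii : i = i' := hamo i i' h1 h1' h2 h2'
        rw [hii] at h3
        omega
      simp [this]
    · refine ⟨neg (tv n j), by simp, ?_⟩
      rw [eval_neg, sigma_t n (by omega)]
      simp [hS]
  · -- D
    by_cases hT : ∃ i, i < n ∧ τ i = true ∧ i % P n ≤ P n - 1
    · refine ⟨pos n, by simp, ?_⟩
      rw [eval_pos, sigma_x n (le_refl n)]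
      obtain ⟨i, h1, h2, _⟩ := hT
      exact himp i h1 h2
    · refine ⟨neg (tv n (P n - 1)), by simp, ?_⟩
      rw [eval_neg, sigma_t n (by have := P_pos n; omega)]
      simp [hT]

lemma sigma_sat_withUnits {L : List Lit}
    (hamo : ∀ i j, i < n → j < n → τ i = true → τ j = true → i = j)
    (himp : ∀ i, i < n → τ i = true → τ n = true)
    (hL : ∀ l ∈ L, Lit.eval (sigma n τ) l = true) :
    CNF.sat (sigma n τ) (withUnits (phi n) L) := by
  intro C hC
  rcases Finset.mem_union.mp hC with h | h
  · exact sigma_sat n hamo himp C h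
  · rw [List.mem_toFinset] at h
    obtain ⟨l, hl, rfl⟩ := List.mem_map.mp h
    exact ⟨l, by simp, hL l hl⟩

end AMOEnc
namespace AMOEnc

variable {n : ℕ} {σ : Var → Bool}

lemma sem_amo (hsat : CNF.sat σ (phi n)) {i j : ℕ} (hi : i < n) (hj : j < n)
    (hσi : σ i = true) (hσj : σ j = true) : i = j := by
  have hri : σ (rv n (i / P n)) = true := by
    have := sem_pair hsat (memA1 n hi) (a := neg i) (b := pos (rv n (i / P n)))
      (by simp [hσi])
    simpa using this
  have hrj : σ (rv n (j / P n)) = true := by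
    have := sem_pair hsat (memA1 n hj) (a := neg j) (b := pos (rv n (j / P n)))
      (by simp [hσj])
    simpa using this
  have hci : σ (cv n (i % P n)) = true := by
    have := sem_pair hsat (memA2 n hi) (a := neg i) (b := pos (cv n (i % P n)))
      (by simp [hσi])
    simpa using this
  have hcj : σ (cv n (j % P n)) = true := by
    have := sem_pair hsat (memA2 n hj) (a := neg j) (b := pos (cv n (j % P n)))
      (by simp [hσj])
    simpa using this
  have hdiv : i / P n = j / P n :=
    sem_amo_rc (fun a ha => memB1 n ha) (fun a ha => memB2 n ha) (fun a ha => memB3 n ha)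
      hsat (div_lt_P n hi) (div_lt_P n hj) hri hrj
  have hmod : i % P n = j % P n :=
    sem_amo_rc (fun a ha => memC1 n ha) (fun a ha => memC2 n ha) (fun a ha => memC3 n ha)
      hsat (mod_lt_P n i) (mod_lt_P n j) hci hcj
  have h1 := Nat.div_add_mod i (P n)
  have h2 := Nat.div_add_mod j (P n)
  rw [hdiv, hmod] at h1
  omega

lemma sem_imp (hsat : CNF.sat σ (phi n)) {i : ℕ} (hi : i < n) (hσi : σ i = true) :
    σ n = true := by
  have hci : σ (cv n (i % P n)) = true := by
    have := sem_pair hsat (memA2 n hi) (a := neg i) (b := pos (cv n (i % P n)))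
      (by simp [hσi])
    simpa using this
  have hti : σ (tv n (i % P n)) = true :=
    sem_s_of_r (fun a ha => memC1 n ha) hsat (mod_lt_P n i) hci
  have htP : σ (tv n (P n - 1)) = true := by
    refine sem_up (S := tv n) (P := P n) (a := i % P n) (k := P n - 1) (fun a ha => memC2 n ha) hsat ?_ ?_ hti
    · have := mod_lt_P n i; omega
    · have := P_pos n; omega
  have := sem_pair hsat (memD n) (a := neg (tv n (P n - 1))) (b := pos n) (by simp [htP])
  simpa using this

theorem encodes_phi (n : ℕ) : Encodes (n+1) (AMOz n) (phi n) := by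
  intro τ
  constructor
  · intro hA
    rw [AMOz, Bool.and_eq_true] at hA
    obtain ⟨hamo, himp⟩ := hA
    rw [AMO, AtMost, decide_eq_true_eq] at hamo
    rw [decide_eq_true_eq] at himp
    set τ' : ℕ → Bool := fun v => if h : v < n+1 then τ ⟨v, h⟩ else false with hτ'
    have key : ∀ (i : ℕ) (hi : i < n+1), τ' i = τ ⟨i, hi⟩ := by
      intro i hi; rw [hτ']; simp only [dif_pos hi]
    have hamo' : ∀ i j, i < n → j < n → τ' i = true → τ' j = true → i = j := by
      intro i j hi hj hti htj
      have hfi : τ ((⟨i, hi⟩ : Fin n).castSucc) = true := by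
        rw [Fin.castSucc_mk, ← key i (by omega)]; exact hti
      have hfj : τ ((⟨j, hj⟩ : Fin n).castSucc) = true := by
        rw [Fin.castSucc_mk, ← key j (by omega)]; exact htj
      have := Finset.card_le_one.mp hamo ⟨i, hi⟩
        (by simp only [Finset.mem_filter, Finset.mem_univ, true_and]; exact hfi)
        ⟨j, hj⟩ (by simp only [Finset.mem_filter, Finset.mem_univ, true_and]; exact hfj)
      exact congrArg Fin.val this
    have himp' : ∀ i, i < n → τ' i = true → τ' n = true := by
      intro i hi hti
      have hfi : τ ((⟨i, hi⟩ : Fin n).castSucc) = true := by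
        rw [Fin.castSucc_mk, ← key i (by omega)]; exact hti
      have h2 := himp ⟨i, hi⟩ hfi
      rw [key n (by omega)]
      exact h2
    refine ⟨sigma n τ', ?_, sigma_sat n hamo' himp'⟩
    intro i
    rw [sigma_x n (by omega : i.1 ≤ n), key i.1 i.isLt]
  · rintro ⟨σ, hagree, hsat⟩
    rw [AMOz, Bool.and_eq_true]
    constructor
    · rw [AMO, AtMost, decide_eq_true_eq]
      rw [Finset.card_le_one]
      intro i hi j hj
      simp only [Finset.mem_filter, Finset.mem_univ, true_and] at hi hj
      have hσi : σ i.1 = true := by rw [← hi, ← hagree i.castSucc]; rfl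
      have hσj : σ j.1 = true := by rw [← hj, ← hagree j.castSucc]; rfl
      exact Fin.ext (sem_amo hsat i.isLt j.isLt hσi hσj)
    · rw [decide_eq_true_eq]
      intro i hti
      have hσi : σ i.1 = true := by rw [← hti, ← hagree i.castSucc]; rfl
      have := sem_imp hsat i.isLt hσi
      have hlast : σ (Fin.last n).1 = τ (Fin.last n) := hagree (Fin.last n)
      rw [← hlast]
      exact this

end AMOEnc
namespace AMOEnc

variable (n : ℕ)

lemma card_phi : (phi n).card ≤ 2 * n + 6 * P n := by
  calc (phi n).card ≤ (clauseList n).length := List.toFinset_card_le _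
  _ ≤ 2 * n + 6 * P n := by
      simp only [clauseList, List.length_append, List.length_map, List.length_range,
        List.length_singleton]
      have := P_pos n
      omega

lemma vars_phi : CNF.vars (phi n) ⊆ Finset.range (n + 1 + 4 * P n) := by
  intro v hv
  rw [CNF.vars, Finset.mem_sup] at hv
  obtain ⟨C, hC, hvC⟩ := hv
  rw [Finset.mem_range]
  rw [mem_phi_iff] at hC
  unfold clauseList at hC
  simp only [List.mem_append, List.mem_map, List.mem_range, List.mem_singleton] at hC
  have hP := P_pos n
  rcases hC with ((((((((⟨i,hi,rfl⟩|⟨i,hi,rfl⟩)|⟨a,ha,rfl⟩)|⟨a,ha,rfl⟩)|⟨a,ha,rfl⟩)|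
      ⟨j,hj,rfl⟩)|⟨j,hj,rfl⟩)|⟨j,hj,rfl⟩)|rfl) <;>
    simp only [Finset.mem_image, Finset.mem_insert, Finset.mem_singleton] at hvC <;>
    obtain ⟨l, hl, rfl⟩ := hvC
  case _ => have := div_lt_P n hi
            rcases hl with rfl | rfl <;> simp only [pos_fst, neg_fst, rv] <;> omega
  case _ => have := mod_lt_P n i
            rcases hl with rfl | rfl <;> simp only [pos_fst, neg_fst, cv] <;> omega
  case _ => rcases hl with rfl | rfl <;> simp only [pos_fst, neg_fst, rv, sv] <;> omega
  case _ => rcases hl with rfl | rfl <;> simp only [pos_fst, neg_fst, sv] <;> omega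
  case _ => rcases hl with rfl | rfl <;> simp only [pos_fst, neg_fst, rv, sv] <;> omega
  case _ => rcases hl with rfl | rfl <;> simp only [pos_fst, neg_fst, cv, tv] <;> omega
  case _ => rcases hl with rfl | rfl <;> simp only [pos_fst, neg_fst, tv] <;> omega
  case _ => rcases hl with rfl | rfl <;> simp only [pos_fst, neg_fst, cv, tv] <;> omega
  case _ => rcases hl with rfl | rfl <;> simp only [pos_fst, neg_fst, tv] <;> omega

lemma card_auxVars : (CNF.auxVars (n+1) (phi n)).card ≤ 4 * P n := by
  have hsub : CNF.auxVars (n+1) (phi n) ⊆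
      Finset.range (n + 1 + 4 * P n) \ Finset.range (n+1) :=
    Finset.sdiff_subset_sdiff (vars_phi n) (le_refl _)
  calc (CNF.auxVars (n+1) (phi n)).card
      ≤ (Finset.range (n + 1 + 4 * P n) \ Finset.range (n+1)).card :=
        Finset.card_le_card hsub
    _ = 4 * P n := by
        rw [Finset.card_sdiff_of_subset (Finset.range_subset_range.mpr (by omega)),
          Finset.card_range, Finset.card_range]
        omega

end AMOEnc
namespace AMOEnc
open Classical

lemma eval_sigma_input (n : ℕ) {τ : ℕ → Bool} {l : Lit} (h : l.1 ≤ n) :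
    Lit.eval (sigma n τ) l = Lit.eval τ l := by
  rw [Lit.eval, Lit.eval, sigma_x n h]

lemma witness_eval (n : ℕ) {L : List Lit} {τ : ℕ → Bool} {l : Lit}
    (hamo : ∀ i j, i < n → j < n → τ i = true → τ j = true → i = j)
    (himp : ∀ i, i < n → τ i = true → τ n = true)
    (hL : ∀ l' ∈ L, l'.1 < n + 1) (hLτ : ∀ l' ∈ L, Lit.eval τ l' = true)
    (hent : ∀ σ : Var → Bool, CNF.sat σ (withUnits (phi n) L) → Lit.eval σ l = true)
    (hln : l.1 < n + 1) : Lit.eval τ l = true := by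
  have hsat : CNF.sat (sigma n τ) (withUnits (phi n) L) := by
    refine sigma_sat_withUnits n hamo himp ?_
    intro l' h
    rw [eval_sigma_input n (Nat.lt_succ_iff.mp (hL l' h))]
    exact hLτ l' h
  have := hent (sigma n τ) hsat
  rwa [eval_sigma_input n (Nat.lt_succ_iff.mp hln)] at this

theorem pc_phi (n : ℕ) : PropagationComplete (n + 1) (phi n) := by
  intro L l hL hl hent
  set ψ := withUnits (phi n) L with hψ
  have hsub : phi n ⊆ ψ := Finset.subset_union_left
  have hunit : ∀ l' ∈ L, ({l'} : Clause) ∈ ψ := fun l' h =>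
    Finset.mem_union_right _ (List.mem_toFinset.mpr (List.mem_map.mpr ⟨l', h, rfl⟩))
  have upL : ∀ l' ∈ L, UnitProp ψ l' := fun l' h => up_single (hunit l' h)
  have hB1ψ : ∀ a, a < P n → ({neg (rv n a), pos (sv n a)} : Clause) ∈ ψ :=
    fun a ha => hsub (memB1 n ha)
  have hB2ψ : ∀ a, a + 1 < P n → ({neg (sv n a), pos (sv n (a+1))} : Clause) ∈ ψ :=
    fun a ha => hsub (memB2 n ha)
  have hB3ψ : ∀ a, a + 1 < P n → ({neg (sv n a), neg (rv n (a+1))} : Clause) ∈ ψ :=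
    fun a ha => hsub (memB3 n ha)
  have hC1ψ : ∀ a, a < P n → ({neg (cv n a), pos (tv n a)} : Clause) ∈ ψ :=
    fun a ha => hsub (memC1 n ha)
  have hC2ψ : ∀ a, a + 1 < P n → ({neg (tv n a), pos (tv n (a+1))} : Clause) ∈ ψ :=
    fun a ha => hsub (memC2 n ha)
  have hC3ψ : ∀ a, a + 1 < P n → ({neg (tv n a), neg (cv n (a+1))} : Clause) ∈ ψ :=
    fun a ha => hsub (memC3 n ha)
  have hP := P_pos n
  -- from a positive input literal, derive its row and column indicators
  have up_r : ∀ i, i < n → UnitProp ψ (pos i) → UnitProp ψ (pos (rv n (i / P n))) := by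
    intro i hi h
    exact up_pair_right (hsub (memA1 n hi)) (by simpa using h)
  have up_c : ∀ i, i < n → UnitProp ψ (pos i) → UnitProp ψ (pos (cv n (i % P n))) := by
    intro i hi h
    exact up_pair_right (hsub (memA2 n hi)) (by simpa using h)
  have up_tP : ∀ i, i < n → UnitProp ψ (pos i) → UnitProp ψ (pos (tv n (P n - 1))) := by
    intro i hi h
    refine chain_up (S := tv n) (P := P n) hC2ψ (show i % P n ≤ P n - 1 by
      have := mod_lt_P n i; omega) (by omega) ?_
    exact chain_s_of_r (R := cv n) (S := tv n) (P := P n) hC1ψ (mod_lt_P n i) (up_c i hi h)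
  by_cases hcon1 : ∃ v b, (v, b) ∈ L ∧ (v, !b) ∈ L
  · obtain ⟨v, b, h1, h2⟩ := hcon1
    right
    refine refute_single (hunit _ h1) ?_
    exact upL _ h2
  by_cases hcon2 : ∃ i j, i < n ∧ j < n ∧ i ≠ j ∧ (i, true) ∈ L ∧ (j, true) ∈ L
  · obtain ⟨i, j, hi, hj, hij, h1, h2⟩ := hcon2
    right
    have upi : UnitProp ψ (pos i) := upL _ h1
    have upj : UnitProp ψ (pos j) := upL _ h2
    rcases Nat.lt_trichotomy (i / P n) (j / P n) with hd | hd | hd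
    · exact chain_refute hB1ψ hB2ψ hB3ψ hd (div_lt_P n hj) (up_r i hi upi) (up_r j hj upj)
    · have hm : i % P n ≠ j % P n := by
        have e1 := Nat.div_add_mod i (P n)
        have e2 := Nat.div_add_mod j (P n)
        rw [hd] at e1
        omega
      rcases Nat.lt_trichotomy (i % P n) (j % P n) with hm' | hm' | hm'
      · exact chain_refute hC1ψ hC2ψ hC3ψ hm' (mod_lt_P n j) (up_c i hi upi) (up_c j hj upj)
      · exact absurd hm' hm
      · exact chain_refute hC1ψ hC2ψ hC3ψ hm' (mod_lt_P n i) (up_c j hj upj) (up_c i hi upi)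
    · exact chain_refute hB1ψ hB2ψ hB3ψ hd (div_lt_P n hi) (up_r j hj upj) (up_r i hi upi)
  by_cases hcon3 : ∃ i, i < n ∧ (i, true) ∈ L ∧ (n, false) ∈ L
  · obtain ⟨i, hi, h1, h2⟩ := hcon3
    right
    refine refute_pair (hsub (memD n)) ?_ ?_
    · simpa using up_tP i hi (upL _ h1)
    · exact upL _ h2
  -- now the consistent cases
  obtain ⟨v0, b⟩ := l
  obtain ⟨v, rfl⟩ : ∃ m : ℕ, m = v0 := ⟨v0, rfl⟩
  have hvb : v < n + 1 := hl
  have hsplit : v < n ∨ n = v := by omega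
  rcases hsplit with hv | rfl
  · -- input variable x_v
    rcases Bool.eq_false_or_eq_true b with rfl | rfl
    · -- l = x_v  (b = true)
      by_cases h1 : (v, true) ∈ L
      · exact Or.inl (upL _ h1)
      · exfalso
        set τ : ℕ → Bool := fun w => if w = n then !(decide ((n, false) ∈ L))
          else decide ((w, true) ∈ L) with hτ
        have hτlt : ∀ w, w < n → τ w = decide ((w, true) ∈ L) := by
          intro w hw
          rw [hτ]; simp only [if_neg (by omega : ¬ w = n)]
        have hev : Lit.eval τ (v, true) = true := by
          refine witness_eval n (l := (v, true)) ?_ ?_ hL ?_ hent hl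
          · intro i j hi hj hti htj
            rw [hτlt i hi] at hti
            rw [hτlt j hj] at htj
            simp only [decide_eq_true_eq] at hti htj
            by_contra hne
            exact hcon2 ⟨i, j, hi, hj, hne, hti, htj⟩
          · intro i hi hti
            rw [hτlt i hi] at hti
            simp only [decide_eq_true_eq] at hti
            rw [hτ]
            simp only [if_pos rfl]
            have : (n, false) ∉ L := fun h => hcon3 ⟨i, hi, hti, h⟩
            simp [this]
          · rintro ⟨w, c⟩ hmem
            have hw : w < n + 1 := hL _ hmem
            have hsplit2 : n = w ∨ w < n := by
              rcases Nat.lt_succ_iff_lt_or_eq.mp hw with h | h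
              · exact Or.inr h
              · exact Or.inl h.symm
            rcases hsplit2 with rfl | hwn
            · rcases Bool.eq_false_or_eq_true c with rfl | rfl
              · -- (n, true) ∈ L
                rw [Lit.eval]
                simp only [hτ, if_pos rfl]
                have : (n, false) ∉ L := fun h => hcon1 ⟨n, true, hmem, h⟩
                simp [this]
              · -- (n, false) ∈ L
                rw [Lit.eval]
                simp only [hτ, if_pos rfl]
                simp [hmem]
            · rcases Bool.eq_false_or_eq_true c with rfl | rfl
              · -- (w, true) ∈ L
                rw [Lit.eval]
                simp only [hτlt w hwn]
                simp [hmem]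
              · -- (w, false) ∈ L
                rw [Lit.eval]
                simp only [hτlt w hwn]
                have : (w, true) ∉ L := fun h => hcon1 ⟨w, false, hmem, h⟩
                simp [this]
        rw [Lit.eval] at hev
        simp only [hτlt v hv] at hev
        simp [h1] at hev
    · -- l = ¬x_v  (b = false)
      by_cases h1 : (v, false) ∈ L
      · exact Or.inl (upL _ h1)
      by_cases h2 : (n, false) ∈ L
      · left
        show UnitProp ψ (neg v)
        have hz : UnitProp ψ (neg n) := upL _ h2
        have ht : UnitProp ψ (neg (tv n (P n - 1))) :=
          up_pair_left (hsub (memD n)) (by simpa using hz)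
        have hc : UnitProp ψ (neg (cv n (v % P n))) :=
          chain_neg_r_of_neg_top hC1ψ hC2ψ (mod_lt_P n v) ht
        exact up_pair_left (hsub (memA2 n hv)) (by simpa using hc)
      by_cases h3 : ∃ w, w < n ∧ w ≠ v ∧ (w, true) ∈ L
      · left
        show UnitProp ψ (neg v)
        obtain ⟨w, hw, hwv, hwL⟩ := h3
        have upw : UnitProp ψ (pos w) := upL _ hwL
        by_cases hdd : w / P n = v / P n
        · have hm : w % P n ≠ v % P n := by
            have e1 := Nat.div_add_mod w (P n)
            have e2 := Nat.div_add_mod v (P n)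
            rw [hdd] at e1
            omega
          have hnc : UnitProp ψ (neg (cv n (v % P n))) :=
            chain_neg_r hC1ψ hC2ψ hC3ψ (mod_lt_P n w) (mod_lt_P n v) hm (up_c w hw upw)
          exact up_pair_left (hsub (memA2 n hv)) (by simpa using hnc)
        · have hnr : UnitProp ψ (neg (rv n (v / P n))) :=
            chain_neg_r hB1ψ hB2ψ hB3ψ (div_lt_P n hw) (div_lt_P n hv) hdd (up_r w hw upw)
          exact up_pair_left (hsub (memA1 n hv)) (by simpa using hnr)
      · -- not entailed: contradiction
        exfalso
        set τ : ℕ → Bool := fun w => decide (w = v ∨ w = n) with hτ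
        have hev : Lit.eval τ (v, false) = true := by
          refine witness_eval n (l := (v, false)) ?_ ?_ hL ?_ hent hl
          · intro i j hi hj hti htj
            rw [hτ] at hti htj
            simp only [decide_eq_true_eq] at hti htj
            omega
          · intro i hi _
            rw [hτ]; simp
          · rintro ⟨w, c⟩ hmem
            have hw : w < n + 1 := hL _ hmem
            have hsplit2 : n = w ∨ w < n := by
              rcases Nat.lt_succ_iff_lt_or_eq.mp hw with h | h
              · exact Or.inr h
              · exact Or.inl h.symm
            rcases Bool.eq_false_or_eq_true c with rfl | rfl
            · -- (w, true) ∈ L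
              rw [Lit.eval]
              simp only [hτ, decide_eq_true_eq]
              rcases hsplit2 with rfl | hwn
              · simp
              · have : w = v := by
                  by_contra hne
                  exact h3 ⟨w, hwn, hne, hmem⟩
                simp [this]
            · -- (w, false) ∈ L
              have hwv : w ≠ v := fun h => h1 (h ▸ hmem)
              have hwn : w ≠ n := fun h => h2 (h ▸ hmem)
              rw [Lit.eval]
              simp only [hτ, decide_eq_true_eq]
              simp [hwv, hwn]
        rw [Lit.eval] at hev
        simp only [hτ, decide_eq_true_eq] at hev
        simp at hev
  · -- variable z  (v = n was substituted: the literal is (v, b) with v = n)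
    rcases Bool.eq_false_or_eq_true b with rfl | rfl
    · -- l = z  (b = true)
      by_cases h1 : (n, true) ∈ L
      · exact Or.inl (upL _ h1)
      by_cases h2 : ∃ i, i < n ∧ (i, true) ∈ L
      · left
        show UnitProp ψ (pos n)
        obtain ⟨i, hi, hiL⟩ := h2
        have := up_tP i hi (upL _ hiL)
        exact up_pair_right (hsub (memD n)) (by simpa using this)
      · exfalso
        set τ : ℕ → Bool := fun _ => false with hτ
        have hev : Lit.eval τ (n, true) = true := by
          refine witness_eval n (l := (n, true)) ?_ ?_ hL ?_ hent (Nat.lt_succ_self n)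
          · intro i j hi hj hti htj
            rw [hτ] at hti
            simp at hti
          · intro i hi hti
            rw [hτ] at hti
            simp at hti
          · rintro ⟨w, c⟩ hmem
            have hw : w < n + 1 := hL _ hmem
            rcases Bool.eq_false_or_eq_true c with rfl | rfl
            · -- (w, true) ∈ L
              exfalso
              have hsplit2 : n = w ∨ w < n := by
                rcases Nat.lt_succ_iff_lt_or_eq.mp hw with h | h
                · exact Or.inr h
                · exact Or.inl h.symm
              rcases hsplit2 with rfl | hwn
              · exact h1 hmem
              · exact h2 ⟨w, hwn, hmem⟩
            · -- (w, false) ∈ L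
              rw [Lit.eval]
              simp [hτ]
        rw [Lit.eval] at hev
        simp [hτ] at hev
    · -- l = ¬z  (b = false)
      by_cases h1 : (n, false) ∈ L
      · exact Or.inl (upL _ h1)
      · exfalso
        set τ : ℕ → Bool := fun w => if w = n then true else decide ((w, true) ∈ L) with hτ
        have hτlt : ∀ w, w < n → τ w = decide ((w, true) ∈ L) := by
          intro w hw
          rw [hτ]; simp only [if_neg (by omega : ¬ w = n)]
        have hev : Lit.eval τ (n, false) = true := by
          refine witness_eval n (l := (n, false)) ?_ ?_ hL ?_ hent (Nat.lt_succ_self n)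
          · intro i j hi hj hti htj
            rw [hτlt i hi] at hti
            rw [hτlt j hj] at htj
            simp only [decide_eq_true_eq] at hti htj
            by_contra hne
            exact hcon2 ⟨i, j, hi, hj, hne, hti, htj⟩
          · intro i hi _
            rw [hτ]; simp
          · rintro ⟨w, c⟩ hmem
            have hw : w < n + 1 := hL _ hmem
            have hsplit2 : n = w ∨ w < n := by
              rcases Nat.lt_succ_iff_lt_or_eq.mp hw with h | h
              · exact Or.inr h
              · exact Or.inl h.symm
            rcases hsplit2 with rfl | hwn
            · rcases Bool.eq_false_or_eq_true c with rfl | rfl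
              · -- (n, true) ∈ L
                rw [Lit.eval]
                simp [hτ]
              · -- (n, false) ∈ L
                exact absurd hmem h1
            · rcases Bool.eq_false_or_eq_true c with rfl | rfl
              · -- (w, true) ∈ L
                rw [Lit.eval]
                simp only [hτlt w hwn]
                simp [hmem]
              · -- (w, false) ∈ L
                rw [Lit.eval]
                simp only [hτlt w hwn]
                have : (w, true) ∉ L := fun h => hcon1 ⟨w, false, hmem, h⟩
                simp [this]
        rw [Lit.eval] at hev
        simp only [hτ, if_pos rfl] at hev
        simp at hev

end AMOEnc
/-- There exists `C > 0` such that for every `n ≥ 1` there is a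
propagation-complete CNF encoding of `AMO'(x_1, …, x_n; z)` using at most
`2n + C·√n` clauses and at most `C·√n` auxiliary variables. -/
theorem amo_indicator_encoding :
    ∃ C : ℝ, 0 < C ∧ ∀ n : ℕ, 1 ≤ n →
      ∃ φ : CNF, Encodes (n + 1) (AMOz n) φ ∧ PropagationComplete (n + 1) φ ∧
        (φ.card : ℝ) ≤ 2 * n + C * Real.sqrt n ∧
        ((CNF.auxVars (n + 1) φ).card : ℝ) ≤ C * Real.sqrt n := by
  refine ⟨12, by norm_num, ?_⟩
  intro n hn
  refine ⟨AMOEnc.phi n, AMOEnc.encodes_phi n, AMOEnc.pc_phi n, ?_, ?_⟩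
  all_goals {
    have hsq : ((Nat.sqrt n : ℕ) : ℝ) ≤ Real.sqrt n := by
      calc ((Nat.sqrt n : ℕ) : ℝ) = Real.sqrt (((Nat.sqrt n : ℕ) : ℝ)^2) :=
            (Real.sqrt_sq (by positivity)).symm
        _ ≤ Real.sqrt n := by
            apply Real.sqrt_le_sqrt
            have := Nat.sqrt_le' n
            exact_mod_cast this
    have hone : (1:ℝ) ≤ Real.sqrt n := by
      rw [show (1:ℝ) = Real.sqrt 1 by simp]
      apply Real.sqrt_le_sqrt
      exact_mod_cast hn
    first
    | · have h := AMOEnc.card_phi n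
        have h' : ((AMOEnc.phi n).card : ℝ) ≤ 2*(n:ℝ) + 6*((Nat.sqrt n : ℕ) : ℝ) + 6 := by
          have : ((AMOEnc.phi n).card : ℝ) ≤ ((2 * n + 6 * AMOEnc.P n : ℕ) : ℝ) := by
            exact_mod_cast h
          rw [AMOEnc.P] at this
          push_cast at this
          linarith
        linarith
    | · have h := AMOEnc.card_auxVars n
        have h' : ((CNF.auxVars (n+1) (AMOEnc.phi n)).card : ℝ)
            ≤ 4*((Nat.sqrt n : ℕ) : ℝ) + 4 := by
          have : ((CNF.auxVars (n+1) (AMOEnc.phi n)).card : ℝ)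
              ≤ ((4 * AMOEnc.P n : ℕ) : ℝ) := by exact_mod_cast h
          rw [AMOEnc.P] at this
          push_cast at this
          linarith
        linarith }
end

section
/- For all integers n ≥ k ≥ 1, setting m = ⌊(k·n²)^(1/3)⌋ and ℓ = 4·⌈(k²·n)^(1/3)⌉, there exist 3-element subsets H_1, ..., H_m of {1,...,ℓ} such that every subfamily of at most k of them admits a transversal; that is, for every S ⊆ {1,...,m} with |S| ≤ k there exists an injective function f : S → {1,...,ℓ} with f(i) ∈ H_i for every i ∈ S. -/
open Finset
lemma pow_le_three_pow_mul_factorial (j : ℕ) : (j:ℝ)^j ≤ 3^j * (Nat.factorial j) := by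
  induction j with
  | zero => simp
  | succ j ih =>
    rcases Nat.eq_zero_or_pos j with rfl | hj
    · norm_num [Nat.factorial]
    have hjR : (0:ℝ) < j := by exact_mod_cast hj
    have h1 : ((j:ℝ)+1)^j ≤ 3 * (j:ℝ)^j := by
      have he : ((j:ℝ)+1)^j = (j:ℝ)^j * (1 + 1/(j:ℝ))^j := by
        rw [← mul_pow]; congr 1; field_simp
      have h2 : (1 + 1/(j:ℝ))^j ≤ Real.exp (1/(j:ℝ)) ^ j := by
        apply pow_le_pow_left₀ (by positivity)
        linarith [Real.add_one_le_exp (1/(j:ℝ))]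
      have h3 : Real.exp (1/(j:ℝ)) ^ j = Real.exp 1 := by
        rw [← Real.exp_nat_mul]; congr 1; field_simp
      have h4 : Real.exp 1 ≤ 3 := le_of_lt (by linarith [Real.exp_one_lt_d9] : Real.exp 1 < 3)
      calc ((j:ℝ)+1)^j = (j:ℝ)^j * (1 + 1/(j:ℝ))^j := he
        _ ≤ (j:ℝ)^j * 3 := by
            refine mul_le_mul_of_nonneg_left ?_ (by positivity)
            calc (1 + 1/(j:ℝ))^j ≤ Real.exp (1/(j:ℝ)) ^ j := h2
              _ = Real.exp 1 := h3
              _ ≤ 3 := h4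
        _ = 3 * (j:ℝ)^j := by ring
    have hfact : ((Nat.factorial (j+1) : ℕ):ℝ) = ((j:ℝ)+1) * (Nat.factorial j : ℕ) := by
      push_cast [Nat.factorial_succ]; ring
    push_cast
    calc ((j:ℝ)+1)^(j+1) = ((j:ℝ)+1) * ((j:ℝ)+1)^j := by ring
      _ ≤ ((j:ℝ)+1) * (3 * (j:ℝ)^j) := by
          refine mul_le_mul_of_nonneg_left h1 (by positivity)
      _ ≤ ((j:ℝ)+1) * (3 * (3^j * (Nat.factorial j : ℕ))) := by
          refine mul_le_mul_of_nonneg_left (mul_le_mul_of_nonneg_left ih (by norm_num)) (by positivity)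
      _ = 3^(j+1) * (((j:ℝ)+1) * (Nat.factorial j : ℕ)) := by ring
      _ = 3^(j+1) * ((Nat.factorial (j+1) : ℕ)) := by rw [hfact]


section
variable {ℓ : ℕ}

abbrev Tri (ℓ : ℕ) := {T : Finset (Fin ℓ) // T.card = 3}

lemma card_tri (ℓ : ℕ) : Fintype.card (Tri ℓ) = ℓ.choose 3 := by
  classical
  rw [Fintype.card_subtype]
  have : (univ : Finset (Finset (Fin ℓ))).filter (fun T => T.card = 3)
      = (univ : Finset (Fin ℓ)).powersetCard 3 := by
    ext T; simp [mem_powersetCard, subset_univ]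
  rw [this, card_powersetCard, card_univ, Fintype.card_fin]

lemma card_tri_sub (U : Finset (Fin ℓ)) :
    ((univ : Finset (Tri ℓ)).filter (fun T => T.1 ⊆ U)).card = U.card.choose 3 := by
  classical
  rw [← card_powersetCard 3 U]
  apply Finset.card_bij (fun (T : Tri ℓ) _ => T.1)
  · intro T hT
    simp only [mem_filter, mem_univ, true_and] at hT
    simp [mem_powersetCard, hT, T.2]
  · intro a _ b _ h
    exact Subtype.ext h
  · intro b hb
    simp only [mem_powersetCard] at hb
    exact ⟨⟨b, hb.2⟩, by simp [hb.1], rfl⟩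

lemma card_forced (m : ℕ) (I : Finset (Fin m)) (U : Finset (Fin ℓ)) :
    ((univ : Finset (Fin m → Tri ℓ)).filter
      (fun H => ∀ i ∈ I, (H i).1 ⊆ U)).card
      = (U.card.choose 3)^I.card * (ℓ.choose 3)^(m - I.card) := by
  classical
  have hset : ((univ : Finset (Fin m → Tri ℓ)).filter
      (fun H => ∀ i ∈ I, (H i).1 ⊆ U))
      = Fintype.piFinset (fun i => if i ∈ I then
          ((univ : Finset (Tri ℓ)).filter (fun T => T.1 ⊆ U)) else univ) := by
    ext H
    simp only [mem_filter, mem_univ, true_and, Fintype.mem_piFinset]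
    constructor
    · intro h i
      by_cases hi : i ∈ I <;> simp [hi, h i]
    · intro h i hi
      have := h i; simp [hi] at this; exact this
  rw [hset, Fintype.card_piFinset]
  rw [← Finset.prod_mul_prod_compl I]
  have h1 : ∀ i ∈ I, (if i ∈ I then ((univ : Finset (Tri ℓ)).filter
            (fun T => T.1 ⊆ U)) else univ).card = U.card.choose 3 := by
    intro i hi; simp only [hi, if_true]; exact card_tri_sub U
  have h2 : ∀ i ∈ Iᶜ, (if i ∈ I then ((univ : Finset (Tri ℓ)).filter
            (fun T => T.1 ⊆ U)) else univ).card = ℓ.choose 3 := by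
    intro i hi
    simp only [mem_compl] at hi
    simp [hi, card_univ, card_tri]
  rw [Finset.prod_congr rfl h1, Finset.prod_congr rfl h2, prod_const, prod_const,
    card_compl, Fintype.card_fin]

end



lemma choose_three_lower (ℓ : ℕ) (h2 : 2 ≤ ℓ) :
    ((ℓ:ℝ) - 2)^3 / 6 ≤ (ℓ.choose 3 : ℝ) := by
  have hnat : (ℓ - 2)^3 ≤ 6 * ℓ.choose 3 := by
    have hd : ℓ.descFactorial 3 = Nat.factorial 3 * ℓ.choose 3 :=
      Nat.descFactorial_eq_factorial_mul_choose ℓ 3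
    have hd2 : ℓ.descFactorial 3 = (ℓ-2) * ((ℓ-1) * (ℓ * 1)) := by
      simp [Nat.descFactorial]
    have h3 : (ℓ-2)^3 ≤ ℓ.descFactorial 3 := by
      rw [hd2]
      have h1 : ℓ - 2 ≤ ℓ - 1 := by omega
      have h2' : ℓ - 2 ≤ ℓ * 1 := by omega
      calc (ℓ-2)^3 = (ℓ-2) * ((ℓ-2) * (ℓ-2)) := by ring
        _ ≤ (ℓ-2) * ((ℓ-1) * (ℓ*1)) := Nat.mul_le_mul_left _ (Nat.mul_le_mul h1 h2')
    calc (ℓ-2)^3 ≤ ℓ.descFactorial 3 := h3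
      _ = 6 * ℓ.choose 3 := by rw [hd]; norm_num [Nat.factorial]
  have hcast : ((ℓ:ℝ) - 2)^3 ≤ 6 * (ℓ.choose 3 : ℝ) := by
    have he : (((ℓ-2 : ℕ)):ℝ) = (ℓ:ℝ) - 2 := by
      push_cast [Nat.cast_sub h2]; ring
    rw [← he]
    exact_mod_cast hnat
  linarith

lemma term_bound (m ℓ k j : ℕ) (hj : 4 ≤ j) (hjk : j ≤ k) (hkl : 4*k ≤ ℓ)
    (hmk : 16*(m*k) ≤ ℓ^2) :
    (m.choose j : ℝ) * (ℓ.choose (j-1) : ℝ) * ((j-1).choose 3 : ℝ)^j ≤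
      (1/12) * (288/343)^j * (ℓ.choose 3 : ℝ)^j := by
  obtain ⟨i, rfl⟩ : ∃ i, j = i + 4 := ⟨j - 4, by omega⟩
  have hl16 : 16 ≤ ℓ := by omega
  have hLge : (16:ℝ) ≤ (ℓ:ℝ) := by exact_mod_cast hl16
  have hLpos : (0:ℝ) < (ℓ:ℝ) := by linarith
  have hI4 : (0:ℝ) < (i:ℝ) + 4 := by positivity
  have hI3 : (0:ℝ) < (i:ℝ) + 3 := by positivity
  have hsub : (i + 4 - 1 : ℕ) = i + 3 := by omega
  rw [hsub]
  have c1 : (m.choose (i+4) : ℝ) ≤ (m:ℝ)^(i+4) / (Nat.factorial (i+4)) := by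
    have := Nat.choose_le_pow_div (α := ℝ) (i+4) m
    exact_mod_cast this
  have c2 : (ℓ.choose (i+3) : ℝ) ≤ (ℓ:ℝ)^(i+3) / (Nat.factorial (i+3)) := by
    have := Nat.choose_le_pow_div (α := ℝ) (i+3) ℓ
    exact_mod_cast this
  have c3 : ((i+3).choose 3 : ℝ) ≤ ((i:ℝ)+3)^3 / 6 := by
    have h := Nat.choose_le_pow_div (α := ℝ) 3 (i+3)
    have h6 : (Nat.factorial 3 : ℝ) = 6 := by norm_num [Nat.factorial]
    rw [h6] at h
    exact_mod_cast h
  have f1 : ((Nat.factorial (i+4) : ℕ):ℝ)⁻¹ ≤ 3^(i+4) / ((i:ℝ)+4)^(i+4) := by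
    rw [inv_le_iff_one_le_mul₀ (by positivity), div_mul_eq_mul_div, le_div_iff₀ (by positivity)]
    have := pow_le_three_pow_mul_factorial (i+4)
    push_cast at this ⊢
    linarith
  have f2 : ((Nat.factorial (i+3) : ℕ):ℝ)⁻¹ ≤ 3^(i+3) / ((i:ℝ)+3)^(i+3) := by
    rw [inv_le_iff_one_le_mul₀ (by positivity), div_mul_eq_mul_div, le_div_iff₀ (by positivity)]
    have := pow_le_three_pow_mul_factorial (i+3)
    push_cast at this ⊢
    linarith
  have key : (3/2) * (m:ℝ) * (ℓ:ℝ) * ((i:ℝ)+3)^2 / ((i:ℝ)+4) ≤ (288/343) * (((ℓ:ℝ)-2)^3/6) := by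
    rw [div_le_iff₀ hI4]
    have hmk' : (m:ℝ) * (k:ℝ) ≤ (ℓ:ℝ)^2/16 := by
      have h := (Nat.cast_le (α := ℝ)).mpr hmk
      push_cast at h
      linarith
    have hjk' : ((i:ℝ)+3) ≤ (k:ℝ) := by
      have h := (Nat.cast_le (α := ℝ)).mpr hjk
      push_cast at h
      linarith
    have hL8 : 343 * (ℓ:ℝ)^3 ≤ 512 * ((ℓ:ℝ)-2)^3 := by
      have h78 : 7*(ℓ:ℝ) ≤ 8*((ℓ:ℝ)-2) := by linarith
      have h := pow_le_pow_left₀ (by linarith : (0:ℝ) ≤ 7*(ℓ:ℝ)) h78 3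
      calc 343 * (ℓ:ℝ)^3 = (7*(ℓ:ℝ))^3 := by ring
        _ ≤ (8*((ℓ:ℝ)-2))^3 := h
        _ = 512 * ((ℓ:ℝ)-2)^3 := by ring
    have hm0 : (0:ℝ) ≤ (m:ℝ) := Nat.cast_nonneg m
    have hk0 : (0:ℝ) ≤ (k:ℝ) := Nat.cast_nonneg k
    nlinarith [mul_nonneg (mul_nonneg hm0 hLpos.le) hI3.le,
      mul_le_mul_of_nonneg_left hmk' (by positivity : (0:ℝ) ≤ (3/2) * (ℓ:ℝ) * ((i:ℝ)+3)),
      mul_le_mul_of_nonneg_left hjk' (by positivity : (0:ℝ) ≤ (3/2) * (m:ℝ) * (ℓ:ℝ) * ((i:ℝ)+3)),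
      mul_le_mul_of_nonneg_right hL8 (by positivity : (0:ℝ) ≤ ((i:ℝ)+4)),
      mul_nonneg (mul_nonneg hm0 hk0) hLpos.le]
  have pre : ((i:ℝ)+3) / (3*(ℓ:ℝ)) ≤ 1/12 := by
    rw [div_le_div_iff₀ (by positivity) (by norm_num)]
    have h : (4*(i+4) : ℕ) ≤ ℓ := by omega
    have h' : (4:ℝ)*((i:ℝ)+4) ≤ (ℓ:ℝ) := by exact_mod_cast h
    linarith
  have hnn2 : (0:ℝ) ≤ ((ℓ:ℝ)-2)^3/6 := by
    have : (0:ℝ) ≤ (ℓ:ℝ)-2 := by linarith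
    positivity
  set I3 : ℝ := (i:ℝ) + 3 with hI3def
  set I4 : ℝ := (i:ℝ) + 4 with hI4def
  set u : ℝ := 3*(m:ℝ)/I4 with hu
  set v : ℝ := 3*(ℓ:ℝ)/I3 with hv
  set w : ℝ := I3^3/6 with hw
  have eu : u^(i+4) = (m:ℝ)^(i+4) * (3^(i+4) / I4^(i+4)) := by
    rw [hu, div_pow, mul_pow]; ring
  have ev : v^(i+3) = (ℓ:ℝ)^(i+3) * (3^(i+3) / I3^(i+3)) := by
    rw [hv, div_pow, mul_pow]; ring
  have hv1 : v * (I3/(3*(ℓ:ℝ))) = 1 := by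
    rw [hv]; field_simp
  have eB : v^(i+3) = v^(i+4) * (I3/(3*(ℓ:ℝ))) := by
    conv_rhs => rw [pow_succ]
    rw [mul_assoc, hv1, mul_one]
  have eC : u * v * w = (3/2) * (m:ℝ) * (ℓ:ℝ) * I3^2 / I4 := by
    rw [hu, hv, hw]; field_simp; ring
  calc (m.choose (i+4) : ℝ) * (ℓ.choose (i+3) : ℝ) * ((i+3).choose 3 : ℝ)^(i+4)
      ≤ ((m:ℝ)^(i+4) / (Nat.factorial (i+4))) * ((ℓ:ℝ)^(i+3) / (Nat.factorial (i+3)))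
          * (I3^3/6)^(i+4) := by
        gcongr <;> first | exact c1 | exact c2 | exact c3 | positivity
    _ = ((m:ℝ)^(i+4) * ((Nat.factorial (i+4):ℝ))⁻¹) * ((ℓ:ℝ)^(i+3) * ((Nat.factorial (i+3):ℝ))⁻¹)
          * (I3^3/6)^(i+4) := by ring
    _ ≤ ((m:ℝ)^(i+4) * (3^(i+4) / I4^(i+4))) * ((ℓ:ℝ)^(i+3) * (3^(i+3) / I3^(i+3)))
          * (I3^3/6)^(i+4) := by
        gcongr <;> first | exact f1 | exact f2 | positivity
    _ = u^(i+4) * v^(i+3) * w^(i+4) := by rw [eu, ev, hw]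
    _ = (I3/(3*(ℓ:ℝ))) * (u*v*w)^(i+4) := by
        rw [eB, mul_pow, mul_pow]; ring
    _ = (I3/(3*(ℓ:ℝ))) * ((3/2) * (m:ℝ) * (ℓ:ℝ) * I3^2 / I4)^(i+4) := by rw [eC]
    _ ≤ (1/12) * ((288/343) * (((ℓ:ℝ)-2)^3/6))^(i+4) := by
        gcongr <;> first | exact pre | exact key | positivity
    _ = (1/12) * (288/343)^(i+4) * ((((ℓ:ℝ)-2)^3/6))^(i+4) := by rw [mul_pow]; ring
    _ ≤ (1/12) * (288/343)^(i+4) * (ℓ.choose 3 : ℝ)^(i+4) := by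
        gcongr <;> first | exact choose_three_lower ℓ (by omega) | exact hnn2 | positivity


lemma geom_tail_le (K : ℕ) : ∑ j ∈ Icc 4 K, ((288:ℝ)/343)^j ≤ (288/343)^4 / (1 - 288/343) := by
  have hq0 : (0:ℝ) ≤ 288/343 := by norm_num
  have hq1 : (288:ℝ)/343 < 1 := by norm_num
  have h1 : Icc 4 K = Ico 4 (K+1) := by rw [Finset.Ico_add_one_right_eq_Icc]
  rw [h1, Finset.sum_Ico_eq_sum_range]
  have h2 : ∀ i ∈ Finset.range (K+1-4), ((288:ℝ)/343)^(4+i) = (288/343)^4 * (288/343)^i := by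
    intro i _; rw [pow_add]
  rw [Finset.sum_congr rfl h2, ← Finset.mul_sum]
  have h3 : ∑ i ∈ Finset.range (K+1-4), ((288:ℝ)/343)^i ≤ 1 / (1 - 288/343) := by
    rw [geom_sum_eq (by norm_num : (288:ℝ)/343 ≠ 1)]
    have he : (((288:ℝ)/343)^(K+1-4) - 1)/((288:ℝ)/343 - 1) = (1 - ((288:ℝ)/343)^(K+1-4))/(1 - (288:ℝ)/343) := by
      rw [← neg_div_neg_eq]; ring_nf
    rw [he, div_le_div_iff₀ (by norm_num) (by norm_num)]
    have : (0:ℝ) ≤ ((288:ℝ)/343)^(K+1-4) := by positivity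
    nlinarith
  calc ((288:ℝ)/343)^4 * ∑ i ∈ Finset.range (K+1-4), ((288:ℝ)/343)^i
      ≤ ((288:ℝ)/343)^4 * (1 / (1 - 288/343)) := by
        exact mul_le_mul_of_nonneg_left h3 (by positivity)
    _ = (288/343)^4 / (1 - 288/343) := by ring

lemma exists_good (m ℓ k : ℕ) (hk4 : 4 ≤ k) (hkl : 4*k ≤ ℓ) (hmk : 16*(m*k) ≤ ℓ^2) :
    ∃ H : Fin m → Finset (Fin ℓ), (∀ i, (H i).card = 3) ∧
      ∀ I : Finset (Fin m), I.card ≤ k → I.card ≤ (I.biUnion H).card := by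
  classical
  set K := min k m with hK
  set N := ℓ.choose 3 with hN
  have hl16 : 16 ≤ ℓ := by omega
  set Bad : Finset (Fin m → Tri ℓ) := univ.filter
    (fun H => ∃ I : Finset (Fin m), I.card ≤ k ∧ (I.biUnion (fun i => (H i).1)).card < I.card)
    with hBad
  -- inclusion into union over (j, I, U)
  have hsub : Bad ⊆ (Icc 4 K).biUnion (fun j =>
      ((univ : Finset (Fin m)).powersetCard j).biUnion (fun I =>
        ((univ : Finset (Fin ℓ)).powersetCard (j-1)).biUnion (fun U =>
          univ.filter (fun H : Fin m → Tri ℓ => ∀ i ∈ I, (H i).1 ⊆ U)))) := by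
    intro H hH
    rw [hBad, mem_filter] at hH
    obtain ⟨-, I, hIk, hlt⟩ := hH
    have hne : I.Nonempty := by
      rw [← card_pos]; omega
    obtain ⟨i0, hi0⟩ := hne
    have h3le : 3 ≤ (I.biUnion (fun i => (H i).1)).card := by
      have hsub0 : (H i0).1 ⊆ I.biUnion (fun i => (H i).1) :=
        subset_biUnion_of_mem (fun i => (H i).1) hi0
      have := card_le_card hsub0
      rw [(H i0).2] at this; exact this
    have hj4 : 4 ≤ I.card := by omega
    have hjm : I.card ≤ m := by simpa using card_le_univ I
    have hjl : I.card - 1 ≤ ℓ := by omega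
    obtain ⟨U, hUsub, -, hUcard⟩ := Finset.exists_subsuperset_card_eq
      (t := (univ : Finset (Fin ℓ))) (n := I.card - 1)
      (Finset.subset_univ (I.biUnion (fun i => (H i).1))) (by omega) (by
        simp only [card_univ, Fintype.card_fin]; omega)
    rw [mem_biUnion]
    refine ⟨I.card, by rw [mem_Icc]; omega, ?_⟩
    rw [mem_biUnion]
    refine ⟨I, by rw [mem_powersetCard]; exact ⟨subset_univ I, rfl⟩, ?_⟩
    rw [mem_biUnion]
    refine ⟨U, by rw [mem_powersetCard]; exact ⟨subset_univ U, hUcard⟩, ?_⟩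
    rw [mem_filter]
    exact ⟨mem_univ _, fun i hi => (subset_biUnion_of_mem (fun i => (H i).1) hi).trans hUsub⟩
  -- counting
  have hcount : Bad.card ≤ ∑ j ∈ Icc 4 K,
      (m.choose j) * ((ℓ.choose (j-1)) * (((j-1).choose 3)^j * N^(m-j))) := by
    refine (card_le_card hsub).trans ?_
    refine (card_biUnion_le).trans ?_
    refine Finset.sum_le_sum (fun j hj => ?_)
    refine (card_biUnion_le).trans ?_
    have hcardI : ((univ : Finset (Fin m)).powersetCard j).card = m.choose j := by
      rw [card_powersetCard, card_univ, Fintype.card_fin]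
    rw [← hcardI, ← smul_eq_mul, ← Finset.sum_const]
    refine Finset.sum_le_sum (fun I hI => ?_)
    refine (card_biUnion_le).trans ?_
    have hcardU : ((univ : Finset (Fin ℓ)).powersetCard (j-1)).card = ℓ.choose (j-1) := by
      rw [card_powersetCard, card_univ, Fintype.card_fin]
    rw [← hcardU, ← smul_eq_mul, ← Finset.sum_const]
    refine Finset.sum_le_sum (fun U hU => ?_)
    rw [mem_powersetCard] at hI hU
    rw [card_forced, hU.2, hI.2]
  -- the sum is < N^m
  have hNpos : 0 < N := Nat.choose_pos (by omega)
  have hsum : (∑ j ∈ Icc 4 K,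
      (m.choose j) * ((ℓ.choose (j-1)) * (((j-1).choose 3)^j * N^(m-j))) : ℕ) < N^m := by
    have hreal : (∑ j ∈ Icc 4 K,
        ((m.choose j : ℝ) * ((ℓ.choose (j-1) : ℝ) * (((j-1).choose 3 : ℝ)^j * (N:ℝ)^(m-j))))) <
        (N:ℝ)^m := by
      have hterm : ∀ j ∈ Icc 4 K,
          (m.choose j : ℝ) * ((ℓ.choose (j-1) : ℝ) * (((j-1).choose 3 : ℝ)^j * (N:ℝ)^(m-j)))
          ≤ (1/12) * (288/343)^j * (N:ℝ)^m := by
        intro j hj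
        rw [mem_Icc] at hj
        have hj4 : 4 ≤ j := hj.1
        have hjk : j ≤ k := le_trans hj.2 (min_le_left _ _)
        have hjm : j ≤ m := le_trans hj.2 (min_le_right _ _)
        have tb := term_bound m ℓ k j hj4 hjk hkl hmk
        have hNm : (N:ℝ)^j * (N:ℝ)^(m-j) = (N:ℝ)^m := by
          rw [← pow_add]; congr 1; omega
        calc (m.choose j : ℝ) * ((ℓ.choose (j-1) : ℝ) * (((j-1).choose 3 : ℝ)^j * (N:ℝ)^(m-j)))
            = ((m.choose j : ℝ) * (ℓ.choose (j-1) : ℝ) * ((j-1).choose 3 : ℝ)^j) * (N:ℝ)^(m-j) := by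
              ring
          _ ≤ ((1/12) * (288/343)^j * (N:ℝ)^j) * (N:ℝ)^(m-j) := by
              exact mul_le_mul_of_nonneg_right tb (by positivity)
          _ = (1/12) * (288/343)^j * (N:ℝ)^m := by
              rw [mul_assoc ((1:ℝ)/12 * (288/343)^j), hNm]
      calc (∑ j ∈ Icc 4 K,
          ((m.choose j : ℝ) * ((ℓ.choose (j-1) : ℝ) * (((j-1).choose 3 : ℝ)^j * (N:ℝ)^(m-j)))))
          ≤ ∑ j ∈ Icc 4 K, (1/12) * (288/343)^j * (N:ℝ)^m := Finset.sum_le_sum hterm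
        _ = ((1/12) * (N:ℝ)^m) * ∑ j ∈ Icc 4 K, ((288:ℝ)/343)^j := by
            rw [Finset.mul_sum]; apply Finset.sum_congr rfl; intro j _; ring
        _ ≤ ((1/12) * (N:ℝ)^m) * ((288/343)^4 / (1 - 288/343)) := by
            exact mul_le_mul_of_nonneg_left (geom_tail_le K) (by positivity)
        _ < (N:ℝ)^m := by
            have hNm : (0:ℝ) < (N:ℝ)^m := by positivity
            nlinarith
    have hcast : ((∑ j ∈ Icc 4 K,
        (m.choose j) * ((ℓ.choose (j-1)) * (((j-1).choose 3)^j * N^(m-j))) : ℕ) : ℝ) <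
        ((N^m : ℕ) : ℝ) := by
      push_cast
      convert hreal using 2
    exact_mod_cast hcast
  have hBadlt : Bad.card < (univ : Finset (Fin m → Tri ℓ)).card := by
    have hcu : (univ : Finset (Fin m → Tri ℓ)).card = N^m := by
      rw [card_univ, Fintype.card_fun, card_tri, Fintype.card_fin]
    omega
  obtain ⟨H, hHgood⟩ : ∃ H : Fin m → Tri ℓ, H ∉ Bad := by
    by_contra hcon
    push_neg at hcon
    have : (univ : Finset (Fin m → Tri ℓ)) ⊆ Bad := fun x _ => hcon x
    have := card_le_card this
    omega
  refine ⟨fun i => (H i).1, fun i => (H i).2, ?_⟩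
  intro I hIk
  by_contra hcon
  push_neg at hcon
  exact hHgood (by
    rw [hBad, mem_filter]
    exact ⟨mem_univ _, I, hIk, hcon⟩)

lemma good_to_hall (m ℓ k : ℕ) (hl0 : 0 < ℓ) (H : Fin m → Finset (Fin ℓ))
    (hgood : ∀ I : Finset (Fin m), I.card ≤ k → I.card ≤ (I.biUnion H).card) :
    ∀ S : Finset (Fin m), S.card ≤ k →
      ∃ f : Fin m → Fin ℓ, Set.InjOn f ↑S ∧ ∀ i ∈ S, f i ∈ H i := by
  classical
  intro S hS
  have hall : ∀ s : Finset {x : Fin m // x ∈ S}, s.card ≤ (s.biUnion (fun i => H i.1)).card := by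
    intro s
    have h1 : (s.image Subtype.val).card = s.card :=
      card_image_of_injective _ Subtype.val_injective
    have hsS : s.card ≤ S.card := by
      have := card_le_univ s
      rwa [Fintype.card_coe] at this
    have h2 : (s.image Subtype.val).card ≤ k := by omega
    have h3 := hgood (s.image Subtype.val) h2
    have h4 : (s.image Subtype.val).biUnion H = s.biUnion (fun i => H i.1) := by
      ext a
      simp only [mem_biUnion, mem_image]
      constructor
      · rintro ⟨i, ⟨x, hx, rfl⟩, ha⟩
        exact ⟨x, hx, ha⟩
      · rintro ⟨x, hx, ha⟩
        exact ⟨x.1, ⟨x, hx, rfl⟩, ha⟩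
    rw [h1, h4] at h3
    exact h3
  obtain ⟨f₀, hinj, hmem⟩ := (Finset.all_card_le_biUnion_card_iff_exists_injective _).mp hall
  refine ⟨fun i => if h : i ∈ S then f₀ ⟨i, h⟩ else ⟨0, hl0⟩, ?_, ?_⟩
  · intro a ha b hb hab
    simp only [Finset.mem_coe] at ha hb
    simp only [dif_pos ha, dif_pos hb] at hab
    have := hinj hab
    exact congrArg Subtype.val this
  · intro i hi
    simp only [dif_pos hi]
    exact hmem ⟨i, hi⟩


/-- For all `n ≥ k ≥ 1`, with `m = ⌊(k·n²)^(1/3)⌋` and `ℓ = 4·⌈(k²·n)^(1/3)⌉`,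
there exist 3-element subsets `H_1, …, H_m` of `{1, …, ℓ}` (modeled as `Fin ℓ`)
such that every subfamily of at most `k` of them admits a transversal: for every
`S ⊆ {1, …, m}` with `|S| ≤ k` there is a map `f`, injective on `S`, with
`f i ∈ H i` for all `i ∈ S`. -/
theorem hall_family (n k : ℕ) (hk : 1 ≤ k) (hkn : k ≤ n)
    (m ℓ : ℕ)
    (hm : m = ⌊((k * n ^ 2 : ℕ) : ℝ) ^ ((1 : ℝ) / 3)⌋₊)
    (hℓ : ℓ = 4 * ⌈((k ^ 2 * n : ℕ) : ℝ) ^ ((1 : ℝ) / 3)⌉₊) :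
    ∃ H : Fin m → Finset (Fin ℓ),
      (∀ i, (H i).card = 3) ∧
      ∀ S : Finset (Fin m), S.card ≤ k →
        ∃ f : Fin m → Fin ℓ, Set.InjOn f ↑S ∧ ∀ i ∈ S, f i ∈ H i := by
  classical
  set c := ⌈((k ^ 2 * n : ℕ) : ℝ) ^ ((1 : ℝ) / 3)⌉₊ with hc
  -- c^3 ≥ k^2 * n
  have hc3 : k^2*n ≤ c^3 := by
    have hx0 : (0:ℝ) ≤ ((k^2*n : ℕ):ℝ) := Nat.cast_nonneg _
    have hy : ((k^2*n : ℕ):ℝ) ^ ((1:ℝ)/3) ≤ (c:ℝ) := Nat.le_ceil _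
    have hpow : (((k^2*n:ℕ):ℝ) ^ ((1:ℝ)/3))^(3:ℕ) = ((k^2*n:ℕ):ℝ) := by
      rw [← Real.rpow_natCast (((k^2*n:ℕ):ℝ) ^ ((1:ℝ)/3)) 3, ← Real.rpow_mul hx0]
      norm_num
    have h := pow_le_pow_left₀ (Real.rpow_nonneg hx0 _) hy 3
    rw [hpow] at h
    exact_mod_cast h
  -- m^3 ≤ k * n^2
  have hm3 : m^3 ≤ k*n^2 := by
    have hx0 : (0:ℝ) ≤ ((k*n^2 : ℕ):ℝ) := Nat.cast_nonneg _
    have hz : (m:ℝ) ≤ ((k*n^2:ℕ):ℝ)^((1:ℝ)/3) := by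
      rw [hm]; exact Nat.floor_le (Real.rpow_nonneg hx0 _)
    have hpow : (((k*n^2:ℕ):ℝ) ^ ((1:ℝ)/3))^(3:ℕ) = ((k*n^2:ℕ):ℝ) := by
      rw [← Real.rpow_natCast (((k*n^2:ℕ):ℝ) ^ ((1:ℝ)/3)) 3, ← Real.rpow_mul hx0]
      norm_num
    have h := pow_le_pow_left₀ (Nat.cast_nonneg m) hz 3
    rw [hpow] at h
    exact_mod_cast h
  -- k ≤ c
  have hkc : k ≤ c := by
    have h1 : k^3 ≤ k^2*n := by nlinarith
    have h2 : k^3 ≤ c^3 := le_trans h1 hc3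
    by_contra hcon
    push_neg at hcon
    have := Nat.pow_lt_pow_left hcon (n := 3) (by norm_num)
    omega
  have hc1 : 1 ≤ c := le_trans hk hkc
  -- m * k ≤ c^2
  have hmkc : m*k ≤ c^2 := by
    have h1 : (m*k)^3 ≤ (k*n^2) * k^3 := by
      calc (m*k)^3 = m^3*k^3 := by ring
        _ ≤ (k*n^2)*k^3 := Nat.mul_le_mul_right _ hm3
    have h2 : (k*n^2)*k^3 = (k^2*n)^2 := by ring
    have h3 : (k^2*n)^2 ≤ (c^3)^2 := Nat.pow_le_pow_left hc3 2
    have h4 : (m*k)^3 ≤ (c^2)^3 := by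
      calc (m*k)^3 ≤ (k*n^2)*k^3 := h1
        _ = (k^2*n)^2 := h2
        _ ≤ (c^3)^2 := h3
        _ = (c^2)^3 := by ring
    by_contra hcon
    push_neg at hcon
    have := Nat.pow_lt_pow_left hcon (n := 3) (by norm_num)
    omega
  have hl0 : 0 < ℓ := by omega
  by_cases hk4 : 4 ≤ k
  · have hkl : 4*k ≤ ℓ := by omega
    have hmk : 16*(m*k) ≤ ℓ^2 := by
      have : ℓ^2 = 16*c^2 := by rw [hℓ]; ring
      omega
    obtain ⟨H, hcard, hgood⟩ := exists_good m ℓ k hk4 hkl hmk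
    exact ⟨H, hcard, good_to_hall m ℓ k hl0 H hgood⟩
  · -- k ≤ 3 : constant family works
    push_neg at hk4
    have hl4 : 4 ≤ ℓ := by omega
    have h0 : (0:ℕ) < ℓ := by omega
    have h1 : (1:ℕ) < ℓ := by omega
    have h2 : (2:ℕ) < ℓ := by omega
    set T : Finset (Fin ℓ) := {⟨0, h0⟩, ⟨1, h1⟩, ⟨2, h2⟩} with hT
    have hTcard : T.card = 3 := by
      rw [hT]
      rw [card_insert_of_notMem (by simp [Fin.ext_iff]),
        card_insert_of_notMem (by simp [Fin.ext_iff]), card_singleton]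
    have hgood : ∀ I : Finset (Fin m), I.card ≤ k →
        I.card ≤ (I.biUnion (fun _ : Fin m => T)).card := by
      intro I hIk
      rcases I.eq_empty_or_nonempty with rfl | ⟨i0, hi0⟩
      · simp
      · have hsub0 : T ⊆ I.biUnion (fun _ : Fin m => T) :=
          subset_biUnion_of_mem (fun _ : Fin m => T) hi0
        have h3 := card_le_card hsub0
        rw [hTcard] at h3
        omega
    exact ⟨fun _ => T, fun _ => hTcard, good_to_hall m ℓ k hl0 _ hgood⟩
end

section
/- Let q be a prime power, let k ≥ 2 be an integer, and let d = ⌈q/(k−1)⌉. For a polynomial f over the finite field F_q, let S_f = {(a, f(a)) : a ∈ F_q} ⊆ F_q × F_q be the graph of f. Then for any k pairwise distinct polynomials f_1, ..., f_k over F_q, each of degree strictly less than d, the set S_{f_k} is not contained in the union S_{f_1} ∪ S_{f_2} ∪ ⋯ ∪ S_{f_{k−1}}; consequently the family {S_f : f ∈ F_q[x], deg f < d}, which has exactly q^d members, is (k−1)-cover-free. -/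
/-- The graph `S_f = {(a, f(a)) : a ∈ F}` of a polynomial over a finite field. -/
def polyGraph {F : Type} [Field F] [Fintype F] [DecidableEq F]
    (p : Polynomial F) : Finset (F × F) :=
  Finset.univ.image (fun a => (a, Polynomial.eval a p))

lemma mem_polyGraph {F : Type} [Field F] [Fintype F] [DecidableEq F]
    {p : Polynomial F} {x : F × F} :
    x ∈ polyGraph p ↔ x.2 = Polynomial.eval x.1 p := by
  simp only [polyGraph, Finset.mem_image, Finset.mem_univ, true_and]
  constructor
  · rintro ⟨a, rfl⟩; rfl
  · intro h; exact ⟨x.1, by rw [← h]⟩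

lemma poly_eq_of_eval_eq {F : Type} [Field F] [Fintype F] [DecidableEq F]
    {p q : Polynomial F} {d : ℕ} (hd : d ≤ Fintype.card F)
    (hp : p.degree < (d : WithBot ℕ)) (hq : q.degree < (d : WithBot ℕ))
    (h : ∀ a : F, Polynomial.eval a p = Polynomial.eval a q) : p = q := by
  by_contra hne
  have hsub : p - q ≠ 0 := sub_ne_zero.mpr hne
  have hdeg : (p - q).degree < (d : WithBot ℕ) :=
    lt_of_le_of_lt (Polynomial.degree_sub_le p q) (max_lt hp hq)
  have hnat : (p - q).natDegree < d :=
    (Polynomial.natDegree_lt_iff_degree_lt hsub).mpr (by exact_mod_cast hdeg)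
  have := Polynomial.eq_zero_of_natDegree_lt_card_of_eval_eq_zero (p - q)
    (f := (id : F → F)) Function.injective_id
    (fun a => by simp [h a]) (by simpa using lt_of_lt_of_le hnat hd)
  exact hsub this

/-- Let `F` be a finite field with `q` elements (`q` a prime power), `k ≥ 2`, and
`d = ⌈q/(k−1)⌉`. For any `k` pairwise distinct polynomials of degree `< d`
(here `g` together with `f_1, …, f_{k-1}`), the graph of `g` is not contained in
the union of the graphs of the other `k−1`; consequently the family
`{S_f : deg f < d}` is `(k−1)`-cover-free, and it has exactly `q^d` members. -/
theorem reed_solomon_cover_free (F : Type) [Field F] [Fintype F] [DecidableEq F]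
    (k : ℕ) (hk : 2 ≤ k) (d : ℕ)
    (hd : d = ⌈(Fintype.card F : ℚ) / ((k : ℚ) - 1)⌉₊) :
    (∀ (g : Polynomial F) (f : Fin (k - 1) → Polynomial F),
      Function.Injective f → (∀ i, f i ≠ g) →
      g.degree < (d : WithBot ℕ) → (∀ i, (f i).degree < (d : WithBot ℕ)) →
      ¬ polyGraph g ⊆ Finset.univ.biUnion (fun i => polyGraph (f i))) ∧
    Nat.card {s : Finset (F × F) //
        ∃ p : Polynomial F, p.degree < (d : WithBot ℕ) ∧ s = polyGraph p} =
      Fintype.card F ^ d := by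
  have hq : (0 : ℕ) < Fintype.card F := Fintype.card_pos
  have hk1 : (1 : ℚ) ≤ (k : ℚ) - 1 := by
    have : (2 : ℚ) ≤ (k : ℚ) := by exact_mod_cast hk
    linarith
  have hk1' : (0 : ℚ) < (k : ℚ) - 1 := lt_of_lt_of_le one_pos hk1
  have hdpos : 1 ≤ d := by
    rw [hd]
    exact Nat.one_le_ceil_iff.mpr (div_pos (by exact_mod_cast hq) hk1')
  have hdq : d ≤ Fintype.card F := by
    rw [hd]
    exact Nat.ceil_le.mpr (div_le_self (by positivity) hk1)
  constructor
  · intro g f hinj hfg hg hf hsub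
    -- for each a there is i with eval a (f i) = eval a g
    have key : ∀ a : F, ∃ i, Polynomial.eval a (f i) = Polynomial.eval a g := by
      intro a
      have : (a, Polynomial.eval a g) ∈ polyGraph g := mem_polyGraph.mpr rfl
      have := hsub this
      rw [Finset.mem_biUnion] at this
      obtain ⟨i, -, hi⟩ := this
      exact ⟨i, (mem_polyGraph.mp hi).symm⟩
    choose c hc using key
    -- pigeonhole
    have hcard : (Finset.univ : Finset (Fin (k - 1))).card * (d - 1)
        < (Finset.univ : Finset F).card := by
      rw [Finset.card_univ, Finset.card_univ, Fintype.card_fin]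
      have h1 : ((d : ℕ) - 1 : ℕ) < d := Nat.sub_lt hdpos one_pos
      have h2 : (((d : ℕ) - 1 : ℕ) : ℚ) < (Fintype.card F : ℚ) / ((k : ℚ) - 1) :=
        Nat.lt_ceil.mp (hd ▸ h1)
      have h3 : ((k - 1 : ℕ) : ℚ) * (((d : ℕ) - 1 : ℕ) : ℚ) < (Fintype.card F : ℚ) := by
        have hkk : ((k - 1 : ℕ) : ℚ) = (k : ℚ) - 1 := by
          push_cast [Nat.cast_sub (by omega : 1 ≤ k)]; ring
        rw [hkk]
        calc ((k : ℚ) - 1) * (((d : ℕ) - 1 : ℕ) : ℚ)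
            < ((k : ℚ) - 1) * ((Fintype.card F : ℚ) / ((k : ℚ) - 1)) := by
              exact mul_lt_mul_of_pos_left h2 hk1'
          _ = (Fintype.card F : ℚ) := by field_simp
      exact_mod_cast h3
    obtain ⟨i, -, hi⟩ := Finset.exists_lt_card_fiber_of_mul_lt_card_of_maps_to
      (f := c) (fun a _ => Finset.mem_univ (c a)) hcard
    -- fiber S with card ≥ d on which g and f i agree
    set S := (Finset.univ : Finset F).filter (fun a => c a = i) with hS
    have hScard : d ≤ S.card := by omega
    have heval : ∀ a ∈ S, Polynomial.eval a (g - f i) = 0 := by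
      intro a ha
      rw [hS, Finset.mem_filter] at ha
      rw [Polynomial.eval_sub, ← ha.2, hc a, sub_self]
    have hne : g - f i ≠ 0 := sub_ne_zero.mpr (fun h => hfg i h.symm)
    have hdeg : (g - f i).degree < (d : WithBot ℕ) :=
      lt_of_le_of_lt (Polynomial.degree_sub_le g (f i)) (max_lt hg (hf i))
    have hnat : (g - f i).natDegree < d :=
      (Polynomial.natDegree_lt_iff_degree_lt hne).mpr (by exact_mod_cast hdeg)
    exact hne (Polynomial.eq_zero_of_natDegree_lt_card_of_eval_eq_zero' (g - f i) S heval
      (lt_of_lt_of_le hnat hScard))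
  · -- counting part
    have hb : Function.Bijective
        (fun c : Fin d → F =>
          (⟨polyGraph ((Polynomial.degreeLTEquiv F d).symm c : Polynomial F),
            ((Polynomial.degreeLTEquiv F d).symm c : Polynomial F),
            Polynomial.mem_degreeLT.mp ((Polynomial.degreeLTEquiv F d).symm c).2, rfl⟩ :
          {s : Finset (F × F) //
            ∃ p : Polynomial F, p.degree < (d : WithBot ℕ) ∧ s = polyGraph p})) := by
      constructor
      · intro c₁ c₂ h
        have h' : polyGraph ((Polynomial.degreeLTEquiv F d).symm c₁ : Polynomial F)
            = polyGraph ((Polynomial.degreeLTEquiv F d).symm c₂ : Polynomial F) :=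
          congrArg Subtype.val h
        have heq : ((Polynomial.degreeLTEquiv F d).symm c₁ : Polynomial F)
            = ((Polynomial.degreeLTEquiv F d).symm c₂ : Polynomial F) := by
          apply poly_eq_of_eval_eq hdq
            (Polynomial.mem_degreeLT.mp ((Polynomial.degreeLTEquiv F d).symm c₁).2)
            (Polynomial.mem_degreeLT.mp ((Polynomial.degreeLTEquiv F d).symm c₂).2)
          intro a
          have := h' ▸ (mem_polyGraph.mpr rfl :
            (a, Polynomial.eval a ((Polynomial.degreeLTEquiv F d).symm c₁ : Polynomial F))
              ∈ polyGraph ((Polynomial.degreeLTEquiv F d).symm c₁ : Polynomial F))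
          exact mem_polyGraph.mp this
        have : (Polynomial.degreeLTEquiv F d).symm c₁
            = (Polynomial.degreeLTEquiv F d).symm c₂ := Subtype.ext heq
        exact (Polynomial.degreeLTEquiv F d).symm.injective this
      · rintro ⟨s, p, hp, rfl⟩
        refine ⟨Polynomial.degreeLTEquiv F d ⟨p, Polynomial.mem_degreeLT.mpr hp⟩, ?_⟩
        apply Subtype.ext
        simp only [LinearEquiv.symm_apply_apply]
    rw [← Nat.card_eq_of_bijective _ hb, Nat.card_eq_fintype_card, Fintype.card_fun,
      Fintype.card_fin]
end

section
/- For every integer k ≥ 1 and any k pairwise distinct points v_1, ..., v_k ∈ ℕ^k, there exists a coordinate d ∈ {1,...,k} such that the k points obtained by deleting the d-th coordinate from each v_i are pairwise distinct. -/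
/-- For every `k ≥ 1` (here `k = m + 1`) and any `k` pairwise distinct points
`v_1, …, v_k ∈ ℕ^k`, there is a coordinate `d` such that the `k` points obtained
by deleting the `d`-th coordinate from each `v_i` are pairwise distinct.
Deleting coordinate `d` from `v : Fin (m+1) → ℕ` is `v ∘ d.succAbove`. -/
theorem projection_lemma (m : ℕ) (v : Fin (m + 1) → (Fin (m + 1) → ℕ))
    (hv : Function.Injective v) :
    ∃ d : Fin (m + 1), Function.Injective (fun i => v i ∘ d.succAbove) := by
  by_contra h
  push_neg at h
  set V : Fin (m+1) → (Fin (m+1) → ℚ) := fun i j => (v i j : ℚ) with hV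
  set f : Fin (m+1) → (Fin (m+1) → ℚ) := fun i => V i - V 0 with hf
  set W := Submodule.span ℚ (Set.range f) with hW
  -- each standard basis vector lies in W
  have hsingle : ∀ d : Fin (m+1), Pi.single d (1:ℚ) ∈ W := by
    intro d
    obtain ⟨i, j, heq, hne⟩ := Function.not_injective_iff.mp (h d)
    set c : ℚ := V i d - V j d with hc
    have hagree : ∀ j' : Fin (m+1), j' ≠ d → v i j' = v j j' := by
      intro j' hj'
      obtain ⟨t, ht⟩ := Fin.exists_succAbove_eq hj'
      have := congrFun heq t
      simpa [ht] using this
    have hcne : c ≠ 0 := by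
      intro hc0
      apply hne
      apply hv
      funext j'
      by_cases hj' : j' = d
      · subst hj'
        have : (v i j' : ℚ) = v j j' := by
          have := sub_eq_zero.mp hc0
          simpa [hV] using this
        exact_mod_cast this
      · exact hagree j' hj'
    have hdiff : V i - V j = Pi.single d c := by
      funext j'
      by_cases hj' : j' = d
      · subst hj'; simp [hc]
      · simp [Pi.single_eq_of_ne hj', hV, hagree j' hj']
    have hmem : V i - V j ∈ W := by
      have : V i - V j = f i - f j := by simp [hf]
      rw [this]
      exact sub_mem (Submodule.subset_span ⟨i, rfl⟩) (Submodule.subset_span ⟨j, rfl⟩)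
    rw [hdiff] at hmem
    have := W.smul_mem c⁻¹ hmem
    rwa [← Pi.single_smul, smul_eq_mul, inv_mul_cancel₀ hcne] at this
  -- hence W = ⊤
  have htop : W = ⊤ := by
    rw [eq_top_iff, ← (Pi.basisFun ℚ (Fin (m+1))).span_eq, Submodule.span_le]
    rintro x ⟨d, rfl⟩
    simpa [Pi.basisFun_apply] using hsingle d
  -- dimension bound: W spanned by image of nonzero indices
  have hle : Module.finrank ℚ W ≤ m := by
    have hsub : W ≤ Submodule.span ℚ (Set.range (fun i : {i : Fin (m+1) // i ≠ 0} => f i.1)) := by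
      rw [hW, Submodule.span_le]
      rintro x ⟨i, rfl⟩
      by_cases hi : i = 0
      · subst hi
        simp [hf]
      · exact Submodule.subset_span ⟨⟨i, hi⟩, rfl⟩
    have h1 := finrank_range_le_card (R := ℚ) (fun i : {i : Fin (m+1) // i ≠ 0} => f i.1)
    unfold Set.finrank at h1
    have h2 : Fintype.card {i : Fin (m+1) // i ≠ 0} = m := by simp
    have h3 := Submodule.finrank_mono hsub
    omega
  rw [htop] at hle
  have : Module.finrank ℚ (⊤ : Submodule ℚ (Fin (m+1) → ℚ)) = m + 1 := by
    simp [finrank_top]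
  omega
end

section
/- Let n ≥ 3 and let φ be a prime generalized P-encoding on n input variables of minimum size among all generalized P-encodings on n input variables. Then for every i ∈ [n], the set Q_{φ,i} of clauses of φ containing the literal ¬x_i has more than one element. -/
/-- A generalized P-encoding on `n` input variables (the input variables being
`0, …, n-1`): (a) `φ ∧ x_i` is satisfiable for each input variable, and
(b) `φ ⊨ ¬x_i ∨ ¬x_j` for all distinct input variables. -/
def GenPEncoding (n : ℕ) (φ : CNF) : Prop :=
  (∀ i < n, ∃ σ : Var → Bool, σ i = true ∧ CNF.sat σ φ) ∧
  (∀ i < n, ∀ j < n, i ≠ j →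
    ∀ σ : Var → Bool, CNF.sat σ φ → ¬(σ i = true ∧ σ j = true))

/-- `Qset φ i` is the set of clauses of `φ` containing the literal `¬x_i`. -/
def Qset (φ : CNF) (i : ℕ) : Finset Clause :=
  φ.filter (fun C => ((i : Var), false) ∈ C)

/-- `φ` is prime if no CNF formula obtained from `φ` by removing a literal from
one of its clauses is a generalized P-encoding on `n` input variables. -/
def PrimeEncoding (n : ℕ) (φ : CNF) : Prop :=
  GenPEncoding n φ ∧
  ∀ C ∈ φ, ∀ l ∈ C, ¬ GenPEncoding n (insert (C.erase l) (φ.erase C))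

/-- Regular form: for each input variable `x_i`, `|Q_{φ,i}| = 2`, the only input
variable occurring in the clauses of `Q_{φ,i}` is `x_i`, and each clause of
`Q_{φ,i}` has exactly two literals. -/
def RegularForm (n : ℕ) (φ : CNF) : Prop :=
  ∀ i < n, (Qset φ i).card = 2 ∧
    (∀ C ∈ Qset φ i, ∀ l ∈ C, l.1 < n → l.1 = i) ∧
    (∀ C ∈ Qset φ i, C.card = 2)

/-- `Lset φ i` is the set of literals `e` such that the clause `{¬x_i, e}`
belongs to `φ`. -/
def Lset (φ : CNF) (i : ℕ) : Set Lit :=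
  {e | ({((i : Var), false), e} : Clause) ∈ φ}


lemma eval_update_of_ne {σ : Var → Bool} {x : Var} {c : Bool} {l : Lit} (h : l.1 ≠ x) :
    Lit.eval (Function.update σ x c) l = Lit.eval σ l := by
  simp [Lit.eval, Function.update_of_ne h]

lemma key1 (σ : Var → Bool) (i v : Var) (b c : Bool)
    (h : Lit.eval σ (v, c) = true) :
    Lit.eval (Function.update σ i (Lit.eval σ (v, b))) ((i : Var), c == b) = true := by
  simp only [Lit.eval, Function.update_self] at h ⊢
  cases b <;> cases c <;> simp_all

lemma key2 (σ : Var → Bool) (i v : Var) (b c : Bool)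
    (h : Lit.eval σ ((i : Var), c == b) = true) :
    Lit.eval (Function.update σ v (if b then σ i else !(σ i))) (v, c) = true := by
  simp only [Lit.eval, Function.update_self] at h ⊢
  cases b <;> cases c <;> simp_all

lemma bool_of_ne_false {x : Bool} (h : x ≠ false) : x = true := by
  cases x
  · exact absurd rfl h
  · rfl

/-- Let `n ≥ 3` and let `φ` be a prime generalized P-encoding on `n` input
variables of minimum size among all generalized P-encodings on `n` input
variables. Then for every `i ∈ [n]`, the set `Q_{φ,i}` has more than one
element. -/
theorem no_single_clause (n : ℕ) (hn : 3 ≤ n) (φ : CNF)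
    (hprime : PrimeEncoding n φ)
    (hmin : ∀ ψ : CNF, GenPEncoding n ψ → φ.card ≤ ψ.card) :
    ∀ i < n, 1 < (Qset φ i).card := by
  obtain ⟨⟨ha, hb⟩, hpr⟩ := hprime
  intro i hi
  by_contra hcard
  push_neg at hcard
  obtain ⟨j, hjn, hji⟩ : ∃ j, j < n ∧ j ≠ i := by
    rcases eq_or_ne i 0 with h | h
    · exact ⟨1, by omega, by omega⟩
    · exact ⟨0, by omega, fun hh => h hh.symm⟩
  -- flipping x_i to true preserves clauses not containing ¬x_i
  have hflip : ∀ σ : Var → Bool, CNF.sat σ φ → ∀ D ∈ φ, ((i : Var), false) ∉ D →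
      Clause.sat (Function.update σ i true) D := by
    intro σ hσ D hD hDi
    obtain ⟨l, hl, hev⟩ := hσ D hD
    by_cases h : l.1 = i
    · obtain ⟨x, c⟩ := l
      simp only at h
      subst h
      cases c
      · exact absurd hl hDi
      · exact ⟨(x, true), hl, by simp [Lit.eval]⟩
    · exact ⟨l, hl, by rw [eval_update_of_ne h]; exact hev⟩
  -- Step 1: Qset φ i is nonempty
  have hQne : (Qset φ i).Nonempty := by
    by_contra hne
    rw [Finset.not_nonempty_iff_eq_empty] at hne
    obtain ⟨σ, hσj, hσ⟩ := ha j hjn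
    have hsat : CNF.sat (Function.update σ i true) φ := by
      intro D hD
      refine hflip σ hσ D hD ?_
      intro hmem
      have hQ : D ∈ Qset φ i := Finset.mem_filter.2 ⟨hD, hmem⟩
      rw [hne] at hQ
      exact absurd hQ (Finset.notMem_empty D)
    exact hb i hi j hjn (Ne.symm hji) _ hsat
      ⟨by simp, by rw [Function.update_of_ne hji]; exact hσj⟩
  have h1 : (Qset φ i).card = 1 := le_antisymm hcard (Finset.card_pos.2 hQne)
  obtain ⟨C, hQC⟩ := Finset.card_eq_one.1 h1
  have hCQ : C ∈ Qset φ i := by rw [hQC]; exact Finset.mem_singleton_self C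
  have hCφ : C ∈ φ := (Finset.mem_filter.1 hCQ).1
  have hCi : ((i : Var), false) ∈ C := (Finset.mem_filter.1 hCQ).2
  have huniq : ∀ D ∈ φ, ((i : Var), false) ∈ D → D = C := by
    intro D hD hmem
    have hQ : D ∈ Qset φ i := Finset.mem_filter.2 ⟨hD, hmem⟩
    rw [hQC] at hQ
    exact Finset.mem_singleton.1 hQ
  have hflipC : ∀ σ : Var → Bool, CNF.sat σ φ → ∀ D ∈ φ, D ≠ C →
      Clause.sat (Function.update σ i true) D := by
    intro σ hσ D hD hDC
    exact hflip σ hσ D hD (fun hmem => hDC (huniq D hD hmem))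
  -- Step 2a: the positive literal x_i is not in C
  have hpos : ((i : Var), true) ∉ C := by
    intro hmem
    obtain ⟨σ, hσj, hσ⟩ := ha j hjn
    have hsat : CNF.sat (Function.update σ i true) φ := by
      intro D hD
      by_cases hDC : D = C
      · subst hDC
        exact ⟨(i, true), hmem, by simp [Lit.eval]⟩
      · exact hflipC σ hσ D hD hDC
    exact hb i hi j hjn (Ne.symm hji) _ hsat
      ⟨by simp, by rw [Function.update_of_ne hji]; exact hσj⟩
  -- Step 2b: any model with some other input true falsifies all of C except ¬x_i
  have hfalse : ∀ j', j' < n → j' ≠ i → ∀ σ : Var → Bool, CNF.sat σ φ → σ j' = true →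
      ∀ l ∈ C, l ≠ ((i : Var), false) → Lit.eval σ l = false := by
    intro j' hj'n hj'i σ hσ hσj' l hlC hlne
    by_contra hev
    have hev' : Lit.eval σ l = true := bool_of_ne_false hev
    have hli : l.1 ≠ i := by
      intro h
      obtain ⟨x, c⟩ := l
      simp only at h
      subst h
      cases c
      · exact hlne rfl
      · exact hpos hlC
    have hsat : CNF.sat (Function.update σ i true) φ := by
      intro D hD
      by_cases hDC : D = C
      · subst hDC
        exact ⟨l, hlC, by rw [eval_update_of_ne hli]; exact hev'⟩
      · exact hflipC σ hσ D hD hDC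
    exact hb i hi j' hj'n (Ne.symm hj'i) _ hsat
      ⟨by simp, by rw [Function.update_of_ne hj'i]; exact hσj'⟩
  -- a model with x_i true, and a literal e of C witnessed by it
  obtain ⟨τ₀, hτ₀i, hτ₀⟩ := ha i hi
  obtain ⟨e, heC, hee⟩ := hτ₀ C hCφ
  have heni : e ≠ ((i : Var), false) := by
    intro h
    rw [h] at hee
    simp [Lit.eval, hτ₀i] at hee
  -- Step 2d via primality: inside any x_i-true model, C is satisfied by a unique literal
  have hone : ∀ l₁ ∈ C, l₁ ≠ ((i : Var), false) →
      ∀ τ : Var → Bool, CNF.sat τ φ → τ i = true → ∀ l ∈ C, l ≠ l₁ → Lit.eval τ l = false := by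
    intro l₁ hl₁C hl₁ne
    by_contra hcon
    push_neg at hcon
    obtain ⟨τ, hτ, hτi, l, hlC, hlne, hlev⟩ := hcon
    have hlev' : Lit.eval τ l = true := bool_of_ne_false hlev
    apply hpr C hCφ l₁ hl₁C
    constructor
    · -- condition (a)
      intro j' hj'n
      by_cases hj'i : j' = i
      · subst hj'i
        refine ⟨τ, hτi, ?_⟩
        intro D hD
        rcases Finset.mem_insert.1 hD with h | h
        · rw [h]
          exact ⟨l, Finset.mem_erase.2 ⟨hlne, hlC⟩, hlev'⟩
        · exact hτ D (Finset.mem_erase.1 h).2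
      · obtain ⟨σ, hσj', hσ⟩ := ha j' hj'n
        have hσi : σ i = false := by
          cases hh : σ i
          · rfl
          · exact absurd ⟨hh, hσj'⟩ (hb i hi j' hj'n (Ne.symm hj'i) σ hσ)
        refine ⟨σ, hσj', ?_⟩
        intro D hD
        rcases Finset.mem_insert.1 hD with h | h
        · rw [h]
          exact ⟨((i : Var), false), Finset.mem_erase.2 ⟨Ne.symm hl₁ne, hCi⟩,
            by simp [Lit.eval, hσi]⟩
        · exact hσ D (Finset.mem_erase.1 h).2
    · -- condition (b)
      intro a han b' hbn hab σ hσ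
      have hσφ : CNF.sat σ φ := by
        intro D hD
        by_cases hDC : D = C
        · obtain ⟨l', hl', hev''⟩ := hσ (C.erase l₁) (Finset.mem_insert_self _ _)
          rw [hDC]
          exact ⟨l', (Finset.mem_erase.1 hl').2, hev''⟩
        · exact hσ D (Finset.mem_insert_of_mem (Finset.mem_erase.2 ⟨hDC, hD⟩))
      exact hb a han b' hbn hab σ hσφ
  -- consequently C = {¬x_i, e}
  have hCall : ∀ l ∈ C, l ≠ ((i : Var), false) → l = e := by
    intro l hlC hlne
    by_contra hle
    have hef := hone l hlC hlne τ₀ hτ₀ hτ₀i e heC (fun h => hle h.symm)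
    rw [hee] at hef
    exact Bool.noConfusion hef
  -- F1: every model with x_i true makes e true
  have hF1 : ∀ σ : Var → Bool, CNF.sat σ φ → σ i = true → Lit.eval σ e = true := by
    intro σ hσ hσi
    obtain ⟨l, hlC, hlev⟩ := hσ C hCφ
    have hlne : l ≠ ((i : Var), false) := by
      intro h
      rw [h] at hlev
      simp [Lit.eval, hσi] at hlev
    rw [← hCall l hlC hlne]
    exact hlev
  obtain ⟨v, b⟩ := e
  have hvi : v ≠ i := by
    intro h
    subst h
    cases b
    · exact heni rfl
    · exact hpos heC
  -- the variable of e cannot be an input variable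
  by_cases hvn : v < n
  · cases b with
    | true =>
      have h1 := hF1 τ₀ hτ₀ hτ₀i
      exact hb i hi v hvn (fun h => hvi h.symm) τ₀ hτ₀
        ⟨hτ₀i, by simpa [Lit.eval] using h1⟩
    | false =>
      obtain ⟨k, hkn, hki, hkv⟩ : ∃ k, k < n ∧ k ≠ i ∧ k ≠ v := by
        have hc2 : ({i, v} : Finset ℕ).card ≤ 2 := by
          refine le_trans (Finset.card_insert_le _ _) ?_
          simp
        have hns : ¬(Finset.range 3 ⊆ ({i, v} : Finset ℕ)) := by
          intro hsub
          have hle := Finset.card_le_card hsub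
          rw [Finset.card_range] at hle
          omega
        obtain ⟨k, hk3, hk⟩ := Finset.not_subset.1 hns
        rw [Finset.mem_range] at hk3
        simp only [Finset.mem_insert, Finset.mem_singleton, not_or] at hk
        exact ⟨k, by omega, hk.1, hk.2⟩
      obtain ⟨ρ, hρk, hρ⟩ := ha k hkn
      have hev := hfalse k hkn hki ρ hρ hρk (v, false) heC heni
      have hρv : ρ v = true := by simpa [Lit.eval] using hev
      exact hb v hvn k hkn (Ne.symm hkv) ρ hρ ⟨hρv, hρk⟩
  -- main case: v is an auxiliary variable; substitute e ↦ x_i to get a smaller encoding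
  · set s : Lit → Lit := fun l => if l.1 = v then ((i : Var), l.2 == b) else l with hs
    set ψ : CNF := (φ.erase C).image (fun D => D.image s) with hψdef
    have hψcard : ψ.card < φ.card := by
      have h1' : ψ.card ≤ (φ.erase C).card := Finset.card_image_le
      have h2' : (φ.erase C).card = φ.card - 1 := Finset.card_erase_of_mem hCφ
      have h3' : 0 < φ.card := Finset.card_pos.2 ⟨C, hCφ⟩
      omega
    have hfw : ∀ σ : Var → Bool, CNF.sat σ φ →
        CNF.sat (Function.update σ i (Lit.eval σ ((v : Var), b))) ψ := by
      intro σ hσ D' hD'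
      obtain ⟨D, hD, rfl⟩ := Finset.mem_image.1 hD'
      obtain ⟨hDC, hDφ⟩ := Finset.mem_erase.1 hD
      obtain ⟨l, hlD, hlev⟩ := hσ D hDφ
      refine ⟨s l, Finset.mem_image_of_mem s hlD, ?_⟩
      obtain ⟨x, c⟩ := l
      by_cases hxv : x = v
      · subst hxv
        have hsl : s (x, c) = ((i : Var), c == b) := by simp [hs]
        rw [hsl]
        exact key1 σ i x b c hlev
      · have hsl : s (x, c) = (x, c) := by simp [hs, hxv]
        rw [hsl]
        by_cases hxi : x = i
        · subst hxi
          cases c with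
          | false => exact absurd (huniq D hDφ hlD) hDC
          | true =>
            have hσi : σ x = true := by simpa [Lit.eval] using hlev
            have h1 := hF1 σ hσ hσi
            simpa [Lit.eval] using h1
        · rw [eval_update_of_ne hxi]
          exact hlev
    have hbw : ∀ σ : Var → Bool, CNF.sat σ ψ →
        CNF.sat (Function.update σ v (if b then σ i else !(σ i))) φ := by
      intro σ hσ D hD
      by_cases hDC : D = C
      · subst hDC
        cases hσi : σ i with
        | false =>
          refine ⟨((i : Var), false), hCi, ?_⟩
          rw [eval_update_of_ne (show ((i : Var), false).1 ≠ v from Ne.symm hvi)]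
          simp [Lit.eval, hσi]
        | true =>
          exact ⟨((v : Var), b), heC, by cases b <;> simp [Lit.eval, hσi]⟩
      · have hDψ : D.image s ∈ ψ :=
          Finset.mem_image_of_mem _ (Finset.mem_erase.2 ⟨hDC, hD⟩)
        obtain ⟨l', hl', hev'⟩ := hσ _ hDψ
        obtain ⟨l, hlD, rfl⟩ := Finset.mem_image.1 hl'
        obtain ⟨x, c⟩ := l
        refine ⟨(x, c), hlD, ?_⟩
        by_cases hxv : x = v
        · subst hxv
          have hsl : s (x, c) = ((i : Var), c == b) := by simp [hs]
          rw [hsl] at hev'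
          exact key2 σ i x b c hev'
        · have hsl : s (x, c) = (x, c) := by simp [hs, hxv]
          rw [hsl] at hev'
          rw [eval_update_of_ne hxv]
          exact hev'
    have hψenc : GenPEncoding n ψ := by
      constructor
      · intro j' hj'n
        obtain ⟨σ, hσj', hσ⟩ := ha j' hj'n
        refine ⟨Function.update σ i (Lit.eval σ ((v : Var), b)), ?_, hfw σ hσ⟩
        by_cases hj'i : j' = i
        · subst hj'i
          rw [Function.update_self]
          exact hF1 σ hσ hσj'
        · rw [Function.update_of_ne hj'i]
          exact hσj'
      · intro a han c' hcn hac σ hσ hboth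
        have hσφ := hbw σ hσ
        have hav : a ≠ v := fun h => hvn (h ▸ han)
        have hcv : c' ≠ v := fun h => hvn (h ▸ hcn)
        exact hb a han c' hcn hac _ hσφ
          ⟨by rw [Function.update_of_ne hav]; exact hboth.1,
           by rw [Function.update_of_ne hcv]; exact hboth.2⟩
    exact absurd (hmin ψ hψenc) (not_le.2 hψcard)
end

section
/- Let n ≥ 4 and let φ be a prime generalized P-encoding on n input variables of minimum size among all generalized P-encodings on n input variables. Then either there is a generalized P-encoding φ' on n input variables in regular form with |φ'| = |φ|, or there is a generalized P-encoding φ' on n−1 input variables such that |φ| ≥ |φ'| + 3. -/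
open Finset

lemma eval_eq (σ : Var → Bool) (l : Lit) : Lit.eval σ l = (σ l.1 == l.2) := by
  rcases l with ⟨v, b⟩; cases b <;> simp [Lit.eval]

lemma beq_shuffle (a b c : Bool) : ((a == c) == (b == c)) = (a == b) := by
  cases a <;> cases b <;> cases c <;> rfl

lemma beq_shuffle2 (a b c : Bool) : (a == (b == c)) = ((a == c) == b) := by
  cases a <;> cases b <;> cases c <;> rfl

lemma sat_of_subset {σ : Var → Bool} {φ ψ : CNF} (h : ψ ⊆ φ) (hs : CNF.sat σ φ) :
    CNF.sat σ ψ := fun C hC => hs C (h hC)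

lemma clause_sat_of_mem {σ : Var → Bool} {C : Clause} {l : Lit} (hl : l ∈ C)
    (he : Lit.eval σ l = true) : Clause.sat σ C := ⟨l, hl, he⟩

/-- Flip lemma: making `x_i` true keeps all clauses satisfied provided every clause
containing `¬x_i` is still satisfied. -/
lemma sat_update_true {σ : Var → Bool} {φ : CNF} {i : ℕ}
    (hs : CNF.sat σ φ)
    (h : ∀ C ∈ φ, ((i : Var), false) ∈ C → Clause.sat (Function.update σ i true) C) :
    CNF.sat (Function.update σ i true) φ := by
  intro C hC
  by_cases hmem : ((i : Var), false) ∈ C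
  · exact h C hC hmem
  · obtain ⟨l, hl, he⟩ := hs C hC
    refine ⟨l, hl, ?_⟩
    rcases l with ⟨v, b⟩
    by_cases hvi : v = i
    · subst hvi
      cases b
      · exact absurd hl hmem
      · simp [eval_eq, Function.update_self]
    · rw [eval_eq] at he ⊢
      simpa [Function.update_of_ne hvi] using he
/-- `Q_i` is nonempty. -/
lemma Qset_nonempty {n : ℕ} {φ : CNF} (hGP : GenPEncoding n φ) (hn : 2 ≤ n)
    {i : ℕ} (hi : i < n) : (Qset φ i).Nonempty := by
  by_contra hne
  rw [Finset.not_nonempty_iff_eq_empty] at hne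
  -- pick k ≠ i
  obtain ⟨k, hk, hki⟩ : ∃ k, k < n ∧ k ≠ i := by
    rcases eq_or_ne i 0 with h0 | h0
    · exact ⟨1, by omega, by omega⟩
    · exact ⟨0, by omega, by omega⟩
  obtain ⟨σ, hσk, hσ⟩ := hGP.1 k hk
  have hflip : CNF.sat (Function.update σ i true) φ := by
    refine sat_update_true hσ ?_
    intro C hC hmem
    exfalso
    have : C ∈ Qset φ i := Finset.mem_filter.2 ⟨hC, hmem⟩
    simp [hne] at this
  refine hGP.2 i hi k hk (Ne.symm hki) _ hflip ⟨Function.update_self _ _ _, ?_⟩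
  rw [Function.update_of_ne hki]; exact hσk

/-- No clause of the form `{¬x_a, x_b}` with distinct inputs `a b`. -/
lemma no_pos_partner {n : ℕ} {φ : CNF} (hGP : GenPEncoding n φ)
    {a b : ℕ} (ha : a < n) (hb : b < n) (hab : a ≠ b)
    (hC : ({((a : Var), false), ((b : Var), true)} : Clause) ∈ φ) : False := by
  obtain ⟨σ, hσa, hσ⟩ := hGP.1 a ha
  obtain ⟨l, hl, he⟩ := hσ _ hC
  rw [Finset.mem_insert, Finset.mem_singleton] at hl
  rcases hl with rfl | rfl
  · rw [eval_eq] at he; simp [hσa] at he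
  · rw [eval_eq] at he; simp at he
    exact hGP.2 a ha b hb hab σ hσ ⟨hσa, he⟩

lemma exists_third (i j : ℕ) : ∃ k < 3, k ≠ i ∧ k ≠ j := by
  rcases eq_or_ne i 0 with h | h
  · rcases eq_or_ne j 1 with h1 | h1
    · exact ⟨2, by omega, by omega, by omega⟩
    · rcases eq_or_ne j 2 with h2 | h2
      · exact ⟨1, by omega, by omega, by omega⟩
      · exact ⟨1, by omega, by omega, fun hh => h1 (by omega)⟩
  · rcases eq_or_ne j 0 with h0 | h0
    · rcases eq_or_ne i 1 with h1 | h1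
      · exact ⟨2, by omega, by omega, by omega⟩
      · rcases eq_or_ne i 2 with h2 | h2
        · exact ⟨1, by omega, by omega, by omega⟩
        · exact ⟨1, by omega, fun hh => h1 (by omega), by omega⟩
    · exact ⟨0, by omega, fun hh => h (hh.symm), fun hh => h0 (hh.symm)⟩

/-- If the only clause containing `¬x_i` is `{¬x_i, ¬x_j}` with `j` another input,
and there are at least 3 inputs, we get a contradiction. -/
lemma no_neg_partner_singleQ {n : ℕ} {φ : CNF} (hGP : GenPEncoding n φ) (hn : 3 ≤ n)
    {i j : ℕ} (hi : i < n) (hj : j < n) (hij : i ≠ j)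
    (hQ : Qset φ i = {({((i : Var), false), ((j : Var), false)} : Clause)}) : False := by
  obtain ⟨k, hk3, hki, hkj⟩ := exists_third i j
  have hk : k < n := by omega
  obtain ⟨σ, hσk, hσ⟩ := hGP.1 k hk
  have hσi : σ i ≠ true := fun h => hGP.2 k hk i hi hki σ hσ ⟨hσk, h⟩
  have hσj : σ j ≠ true := fun h => hGP.2 k hk j hj hkj σ hσ ⟨hσk, h⟩
  have hflip : CNF.sat (Function.update σ i true) φ := by
    refine sat_update_true hσ ?_
    intro C hC hmem
    have hCQ : C ∈ Qset φ i := Finset.mem_filter.2 ⟨hC, hmem⟩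
    rw [hQ, Finset.mem_singleton] at hCQ
    subst hCQ
    refine ⟨((j : Var), false), by simp, ?_⟩
    rw [eval_eq]
    have : i ≠ j := hij
    rw [Function.update_of_ne (Ne.symm this)]
    simp [Bool.not_eq_true] at hσj ⊢
    exact hσj
  refine hGP.2 i hi k hk (fun h => hki h.symm) _ hflip ⟨Function.update_self _ _ _, ?_⟩
  rw [Function.update_of_ne hki]; exact hσk
/-- Any model of the weakened formula (one literal removed from one clause) is a model of φ. -/
lemma sat_of_weak {φ : CNF} {C : Clause} {l : Lit} (hCφ : C ∈ φ) {σ : Var → Bool}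
    (hσ : CNF.sat σ (insert (C.erase l) (φ.erase C))) : CNF.sat σ φ := by
  intro D hD
  by_cases hDC : D = C
  · subst hDC
    obtain ⟨m, hm, he⟩ := hσ _ (Finset.mem_insert_self _ _)
    exact ⟨m, Finset.mem_of_mem_erase hm, he⟩
  · exact hσ _ (Finset.mem_insert_of_mem (Finset.mem_erase.2 ⟨hDC, hD⟩))

/-- Weakened formulas satisfy condition (b). -/
lemma weak_condb {n : ℕ} {φ : CNF} (hGP : GenPEncoding n φ) {C : Clause} {l : Lit}
    (hCφ : C ∈ φ) :
    ∀ i < n, ∀ j < n, i ≠ j → ∀ σ : Var → Bool,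
      CNF.sat σ (insert (C.erase l) (φ.erase C)) → ¬(σ i = true ∧ σ j = true) :=
  fun i hi j hj hij σ hσ => hGP.2 i hi j hj hij σ (sat_of_weak hCφ hσ)

/-- Removing a tautological clause yields a strictly smaller encoding; impossible by minimality. -/
lemma no_taut {n : ℕ} {φ : CNF} (hGP : GenPEncoding n φ)
    (hmin : ∀ ψ : CNF, GenPEncoding n ψ → φ.card ≤ ψ.card)
    {C : Clause} (hCφ : C ∈ φ) {i : ℕ}
    (h1 : ((i : Var), false) ∈ C) (h2 : ((i : Var), true) ∈ C) : False := by
  have hGP' : GenPEncoding n (φ.erase C) := by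
    constructor
    · intro k hk
      obtain ⟨σ, hσk, hσ⟩ := hGP.1 k hk
      exact ⟨σ, hσk, sat_of_subset (Finset.erase_subset _ _) hσ⟩
    · intro a ha b hb hab σ hσ
      refine hGP.2 a ha b hb hab σ ?_
      intro D hD
      by_cases hDC : D = C
      · subst hDC
        cases hv : σ i
        · exact ⟨_, h1, by rw [eval_eq]; simp [hv]⟩
        · exact ⟨_, h2, by rw [eval_eq]; simp [hv]⟩
      · exact hσ _ (Finset.mem_erase.2 ⟨hDC, hD⟩)
  have := hmin _ hGP'
  have hcard : (φ.erase C).card = φ.card - 1 := Finset.card_erase_of_mem hCφ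
  have hpos : 0 < φ.card := Finset.card_pos.2 ⟨C, hCφ⟩
  omega

/-- Structure of clauses in `Q_i` for a prime minimum encoding: binary `{¬x_i, e}`
with `e` not on variable `i`. -/
lemma Qclause_structure {n : ℕ} {φ : CNF} (hprime : PrimeEncoding n φ)
    (hmin : ∀ ψ : CNF, GenPEncoding n ψ → φ.card ≤ ψ.card) (hn : 2 ≤ n)
    {i : ℕ} (hi : i < n) {C : Clause} (hC : C ∈ Qset φ i) :
    ∃ e : Lit, C = ({((i : Var), false), e} : Clause) ∧ e.1 ≠ i := by
  have hGP := hprime.1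
  have hCφ : C ∈ φ := (Finset.mem_filter.1 hC).1
  have hiC : ((i : Var), false) ∈ C := (Finset.mem_filter.1 hC).2
  obtain ⟨σi, hσi, hσ⟩ := hGP.1 i hi
  -- key: for any e ∈ C with e ≠ ¬x_i, σi does not satisfy C.erase e
  have key : ∀ e ∈ C, e ≠ ((i : Var), false) → ¬ Clause.sat σi (C.erase e) := by
    intro e heC hne hsat
    have hnGP := hprime.2 C hCφ e heC
    apply hnGP
    constructor
    · intro k hk
      by_cases hki : k = i
      · subst hki
        refine ⟨σi, hσi, ?_⟩
        intro D hD
        rcases Finset.mem_insert.1 hD with rfl | hD'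
        · exact hsat
        · exact hσ _ (Finset.mem_of_mem_erase hD')
      · obtain ⟨σk, hσk, hσk'⟩ := hGP.1 k hk
        refine ⟨σk, hσk, ?_⟩
        intro D hD
        rcases Finset.mem_insert.1 hD with rfl | hD'
        · refine ⟨((i : Var), false), Finset.mem_erase.2 ⟨hne.symm, hiC⟩, ?_⟩
          rw [eval_eq]
          have : σk i ≠ true := fun h => hGP.2 k hk i hi hki σk hσk' ⟨hσk, h⟩
          simp [Bool.not_eq_true] at this; simp [this]
        · exact hσk' _ (Finset.mem_of_mem_erase hD')
    · exact weak_condb hGP hCφ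
  -- uniqueness of the non-(¬x_i) literal
  have huniq : ∀ e ∈ C, e ≠ ((i : Var), false) → ∀ e' ∈ C, e' ≠ ((i : Var), false) →
      e = e' := by
    intro e heC hne e' heC' hne'
    by_contra hee
    obtain ⟨l, hl, hle⟩ := hσ C hCφ
    have hl1 : l ≠ e ∨ l ≠ e' := by
      by_contra hcon
      push_neg at hcon
      exact hee (hcon.1.symm.trans hcon.2)
    rcases hl1 with h | h
    · exact key e heC hne ⟨l, Finset.mem_erase.2 ⟨h, hl⟩, hle⟩
    · exact key e' heC' hne' ⟨l, Finset.mem_erase.2 ⟨h, hl⟩, hle⟩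
  -- existence
  have hex : ∃ e ∈ C, e ≠ ((i : Var), false) := by
    obtain ⟨l, hl, hle⟩ := hσ C hCφ
    refine ⟨l, hl, ?_⟩
    rintro rfl
    rw [eval_eq] at hle; simp [hσi] at hle
  obtain ⟨e, heC, hne⟩ := hex
  have hCform : C = ({((i : Var), false), e} : Clause) := by
    apply Finset.ext
    intro x
    simp only [Finset.mem_insert, Finset.mem_singleton]
    constructor
    · intro hx
      by_cases hxi : x = ((i : Var), false)
      · exact Or.inl hxi
      · exact Or.inr (huniq x hx hxi e heC hne)
    · rintro (rfl | rfl) <;> assumption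
  refine ⟨e, hCform, ?_⟩
  intro he1
  rcases e with ⟨v, b⟩
  simp only at he1
  subst he1
  cases b
  · exact hne rfl
  · exact no_taut hGP hmin hCφ hiC heC
/-- Substitute variable `v` by the literal on `i`: `x_i` takes the role of `(v,pol)`. -/
def subLit (v i : Var) (pol : Bool) (l : Lit) : Lit :=
  if l.1 = v then (i, l.2 == pol) else l

def subClause (v i : Var) (pol : Bool) (C : Clause) : Clause := C.image (subLit v i pol)

/-- The substitution lemma: if `Q_i = {{¬x_i, (v,pol)}}` with `v` not an input variable,
then substituting `v` by `x_i` in the rest gives a strictly smaller encoding. -/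
lemma subst_smaller {n : ℕ} {φ : CNF} (hGP : GenPEncoding n φ) {i : ℕ} (hi : i < n)
    (v : Var) (pol : Bool) (hv : ¬ v < n)
    (hQ : Qset φ i = {({((i : Var), false), (v, pol)} : Clause)}) :
    ∃ ψ : CNF, GenPEncoding n ψ ∧ ψ.card + 1 ≤ φ.card := by
  have hv' : n ≤ v := Nat.le_of_not_lt hv
  have hvi : v ≠ i := ne_of_gt (lt_of_lt_of_le hi hv')
  have hCQ : ({((i : Var), false), (v, pol)} : Clause) ∈ Qset φ i := by
    rw [hQ]; exact Finset.mem_singleton_self _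
  have hCφ : ({((i : Var), false), (v, pol)} : Clause) ∈ φ := (Finset.mem_filter.1 hCQ).1
  have hnoneg : ∀ D ∈ φ.erase ({((i : Var), false), (v, pol)} : Clause),
      ((i : Var), false) ∉ D := by
    intro D hD hmem
    have : D ∈ Qset φ i := Finset.mem_filter.2 ⟨Finset.mem_of_mem_erase hD, hmem⟩
    rw [hQ, Finset.mem_singleton] at this
    exact (Finset.mem_erase.1 hD).1 this
  refine ⟨(φ.erase ({((i : Var), false), (v, pol)} : Clause)).image (subClause v i pol),
    ⟨?_, ?_⟩, ?_⟩
  · -- condition (a)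
    intro k hk
    by_cases hki : i = k
    · subst hki
      obtain ⟨σ, hσi, hσ⟩ := hGP.1 i hk
      have heval : (σ v == pol) = true := by
        obtain ⟨l, hl, hle⟩ := hσ _ hCφ
        rw [Finset.mem_insert, Finset.mem_singleton] at hl
        rcases hl with rfl | rfl
        · rw [eval_eq] at hle; simp [hσi] at hle
        · rw [eval_eq] at hle; exact hle
      refine ⟨σ, hσi, ?_⟩
      intro D hD
      obtain ⟨D₀, hD₀, rfl⟩ := Finset.mem_image.1 hD
      obtain ⟨l, hl, hle⟩ := hσ _ (Finset.mem_of_mem_erase hD₀)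
      refine ⟨subLit v i pol l, Finset.mem_image_of_mem _ hl, ?_⟩
      rcases l with ⟨w, b⟩
      rw [subLit]
      by_cases hlv : w = v
      · subst hlv
        rw [if_pos rfl, eval_eq]
        rw [eval_eq] at hle
        simp only at hle ⊢
        have h1 : σ w = pol := beq_iff_eq.1 heval
        have h2 : σ w = b := beq_iff_eq.1 hle
        have h3 : b = pol := h2.symm.trans h1
        simp [hσi, h3]
      · simp only [if_neg hlv]
        exact hle
    · obtain ⟨σ, hσk, hσ⟩ := hGP.1 k hk
      have hki' : k ≠ i := fun h => hki h.symm
      have hσi : σ i = false := by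
        have : σ i ≠ true := fun h => hGP.2 k hk i hi hki' σ hσ ⟨hσk, h⟩
        simpa [Bool.not_eq_true] using this
      refine ⟨Function.update σ i (σ v == pol),
        by rw [Function.update_of_ne hki']; exact hσk, ?_⟩
      intro D hD
      obtain ⟨D₀, hD₀, rfl⟩ := Finset.mem_image.1 hD
      obtain ⟨l, hl, hle⟩ := hσ _ (Finset.mem_of_mem_erase hD₀)
      refine ⟨subLit v i pol l, Finset.mem_image_of_mem _ hl, ?_⟩
      rcases l with ⟨w, b⟩
      rw [subLit]
      by_cases hlv : w = v
      · subst hlv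
        rw [if_pos rfl, eval_eq]
        rw [eval_eq] at hle
        simp only [Function.update_self]
        rw [beq_shuffle]
        exact hle
      · rw [if_neg hlv, eval_eq]
        rw [eval_eq] at hle
        simp only
        by_cases hli : w = i
        · subst hli
          exfalso
          cases b
          · exact hnoneg _ hD₀ hl
          · simp [hσi] at hle
        · rw [Function.update_of_ne hli]
          exact hle
  · -- condition (b)
    intro a ha b hb hab σ hσ
    have hsat : CNF.sat (Function.update σ v (σ i == pol)) φ := by
      intro D hD
      by_cases hDC : D = ({((i : Var), false), (v, pol)} : Clause)
      · subst hDC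
        cases hvi' : σ i
        · refine ⟨((i : Var), false), Finset.mem_insert_self _ _, ?_⟩
          rw [eval_eq]
          simp only
          rw [Function.update_of_ne (Ne.symm hvi)]
          simp [hvi']
        · refine ⟨(v, pol), by simp, ?_⟩
          rw [eval_eq]
          simp only [Function.update_self, hvi']
          simp
      · have hD' : D ∈ φ.erase ({((i : Var), false), (v, pol)} : Clause) :=
          Finset.mem_erase.2 ⟨hDC, hD⟩
        obtain ⟨l', hl', hle'⟩ := hσ _ (Finset.mem_image_of_mem _ hD')
        obtain ⟨l, hl, rfl⟩ := Finset.mem_image.1 hl'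
        refine ⟨l, hl, ?_⟩
        rcases l with ⟨w, c⟩
        rw [eval_eq]
        rw [subLit] at hle'
        by_cases hlv : w = v
        · subst hlv
          rw [if_pos rfl, eval_eq] at hle'
          simp only at hle' ⊢
          rw [Function.update_self]
          rw [beq_shuffle2] at hle'
          exact hle'
        · rw [if_neg hlv, eval_eq] at hle'
          simp only at hle' ⊢
          rw [Function.update_of_ne hlv]
          exact hle'
    intro hpair
    refine hGP.2 a ha b hb hab _ hsat ⟨?_, ?_⟩
    · rw [Function.update_of_ne (ne_of_lt (lt_of_lt_of_le ha hv'))]; exact hpair.1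
    · rw [Function.update_of_ne (ne_of_lt (lt_of_lt_of_le hb hv'))]; exact hpair.2
  · -- cardinality
    have h1 := Finset.card_image_le (f := subClause v i pol)
      (s := φ.erase ({((i : Var), false), (v, pol)} : Clause))
    have h2 : (φ.erase ({((i : Var), false), (v, pol)} : Clause)).card = φ.card - 1 :=
      Finset.card_erase_of_mem hCφ
    have h3 : 0 < φ.card := Finset.card_pos.2 ⟨_, hCφ⟩
    omega
def relClause (f : ℕ → ℕ) (C : Clause) : Clause := C.image (fun l => (f l.1, l.2))

def relCNF (f : ℕ → ℕ) (φ : CNF) : CNF := φ.image (relClause f)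

section relabel
variable {f : ℕ → ℕ}

lemma f_inj (hinv : ∀ x, f (f x) = x) : Function.Injective f := by
  intro a b h
  rw [← hinv a, h, hinv b]

lemma relClause_relClause (hinv : ∀ x, f (f x) = x) (C : Clause) : relClause f (relClause f C) = C := by
  apply Finset.ext
  intro ⟨w, b⟩
  simp only [relClause, Finset.mem_image]
  constructor
  · rintro ⟨⟨w1, b1⟩, ⟨⟨w2, b2⟩, h2, heq1⟩, heq2⟩
    simp only [Prod.mk.injEq] at heq1 heq2
    obtain ⟨hw1, hb1⟩ := heq1
    obtain ⟨hw2, hb2⟩ := heq2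
    subst hb1; subst hb2
    rw [← hw2, ← hw1, hinv]
    exact h2
  · intro hw
    exact ⟨(f w, b), ⟨(w, b), hw, rfl⟩, by rw [hinv]⟩

lemma relClause_inj (hinv : ∀ x, f (f x) = x) : Function.Injective (relClause f) := by
  intro C D h
  rw [← relClause_relClause hinv C, h, relClause_relClause hinv D]

lemma card_relCNF (hinv : ∀ x, f (f x) = x) (φ : CNF) : (relCNF f φ).card = φ.card :=
  Finset.card_image_of_injective _ (relClause_inj hinv)

lemma sat_relCNF {σ : Var → Bool} {φ : CNF} :
    CNF.sat σ (relCNF f φ) ↔ CNF.sat (fun w => σ (f w)) φ := by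
  constructor
  · intro h C hC
    obtain ⟨l', hl', he⟩ := h _ (Finset.mem_image_of_mem _ hC)
    obtain ⟨l, hl, rfl⟩ := Finset.mem_image.1 hl'
    refine ⟨l, hl, ?_⟩
    rw [eval_eq] at he ⊢
    exact he
  · intro h C' hC'
    obtain ⟨C, hC, rfl⟩ := Finset.mem_image.1 hC'
    obtain ⟨l, hl, he⟩ := h C hC
    refine ⟨(f l.1, l.2), Finset.mem_image_of_mem _ hl, ?_⟩
    rw [eval_eq] at he ⊢
    exact he

lemma GP_relCNF {n : ℕ} {φ : CNF} (hinv : ∀ x, f (f x) = x) (hmaps : ∀ k, k < n → f k < n)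
    (hGP : GenPEncoding n φ) : GenPEncoding n (relCNF f φ) := by
  constructor
  · intro k hk
    obtain ⟨σ, h1, h2⟩ := hGP.1 (f k) (hmaps k hk)
    refine ⟨fun w => σ (f w), h1, ?_⟩
    rw [sat_relCNF]
    have : (fun w => σ (f (f w))) = σ := funext fun w => by rw [hinv]
    simpa [this] using h2
  · intro a ha b hb hab σ hσ hpair
    have hσ' := sat_relCNF.1 hσ
    refine hGP.2 (f a) (hmaps a ha) (f b) (hmaps b hb)
      (fun h => hab (f_inj hinv h)) _ hσ' ⟨?_, ?_⟩
    · show σ (f (f a)) = true; rw [hinv]; exact hpair.1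
    · show σ (f (f b)) = true; rw [hinv]; exact hpair.2

lemma Qset_relCNF (hinv : ∀ x, f (f x) = x) (φ : CNF) (i : ℕ) :
    Qset (relCNF f φ) (f i) = (Qset φ i).image (relClause f) := by
  apply Finset.ext
  intro D
  simp only [Qset, Finset.mem_filter, Finset.mem_image, relCNF]
  constructor
  · rintro ⟨⟨C, hC, rfl⟩, hmem⟩
    refine ⟨C, ⟨hC, ?_⟩, rfl⟩
    obtain ⟨l, hl, heq⟩ := Finset.mem_image.1 hmem
    rcases l with ⟨w, b⟩
    simp only [Prod.mk.injEq] at heq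
    obtain ⟨hw, hb⟩ := heq
    have : w = i := f_inj hinv hw
    subst this; subst hb
    exact hl
  · rintro ⟨C, ⟨hC, hmem⟩, rfl⟩
    exact ⟨⟨C, hC, rfl⟩, Finset.mem_image_of_mem _ hmem⟩

end relabel

def restrictLast (m : ℕ) (φ : CNF) : CNF :=
  (φ.filter (fun C => ((m : Var), false) ∉ C)).image (fun C => C.erase ((m : Var), true))

lemma GP_restrictLast {m : ℕ} {φ : CNF} (hGP : GenPEncoding (m + 1) φ) :
    GenPEncoding m (restrictLast m φ) := by
  constructor
  · intro k hk
    obtain ⟨σ, hσk, hσ⟩ := hGP.1 k (by omega)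
    have hσm : σ m = false := by
      have : σ m ≠ true := fun h =>
        hGP.2 k (by omega) m (by omega) (by omega) σ hσ ⟨hσk, h⟩
      simpa [Bool.not_eq_true] using this
    refine ⟨σ, hσk, ?_⟩
    intro D hD
    obtain ⟨C, hC, rfl⟩ := Finset.mem_image.1 hD
    obtain ⟨hCφ, hCnm⟩ := Finset.mem_filter.1 hC
    obtain ⟨l, hl, he⟩ := hσ C hCφ
    refine ⟨l, Finset.mem_erase.2 ⟨?_, hl⟩, he⟩
    rintro rfl
    rw [eval_eq] at he
    simp [hσm] at he
  · intro a ha b hb hab σ hσ hpair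
    have hsat : CNF.sat (Function.update σ m false) φ := by
      intro C hC
      by_cases hmem : ((m : Var), false) ∈ C
      · exact ⟨_, hmem, by rw [eval_eq]; simp [Function.update_self]⟩
      · have hD : C.erase ((m : Var), true) ∈ restrictLast m φ :=
          Finset.mem_image_of_mem _ (Finset.mem_filter.2 ⟨hC, hmem⟩)
        obtain ⟨l, hl, he⟩ := hσ _ hD
        obtain ⟨hlne, hlC⟩ := Finset.mem_erase.1 hl
        refine ⟨l, hlC, ?_⟩
        rcases l with ⟨w, c⟩
        have hwm : w ≠ m := by
          rintro rfl
          cases c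
          · exact hmem hlC
          · exact hlne rfl
        rw [eval_eq] at he ⊢
        simpa [Function.update_of_ne hwm] using he
    refine hGP.2 a (by omega) b (by omega) hab _ hsat ⟨?_, ?_⟩
    · rw [Function.update_of_ne (by omega : a ≠ m)]; exact hpair.1
    · rw [Function.update_of_ne (by omega : b ≠ m)]; exact hpair.2

lemma card_restrictLast (m : ℕ) (φ : CNF) :
    (restrictLast m φ).card + (Qset φ m).card ≤ φ.card := by
  have h1 : (restrictLast m φ).card ≤ (φ.filter (fun C => ((m : Var), false) ∉ C)).card :=
    Finset.card_image_le
  have h2 : (Qset φ m).card + (φ.filter (fun C => ((m : Var), false) ∉ C)).card = φ.card := by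
    have := Finset.card_filter_add_card_filter_not
      (s := φ) (p := fun C => ((m : Var), false) ∈ C)
    simpa [Qset] using this
  omega

lemma Qset_restrictLast (m : ℕ) (φ : CNF) (w : ℕ) :
    Qset (restrictLast m φ) w =
      ((Qset φ w).filter (fun C => ((m : Var), false) ∉ C)).image
        (fun C => C.erase ((m : Var), true)) := by
  apply Finset.ext
  intro D
  simp only [Qset, Finset.mem_filter, Finset.mem_image, restrictLast]
  constructor
  · rintro ⟨⟨C, hC, rfl⟩, hmem⟩
    exact ⟨C, ⟨⟨hC.1, Finset.mem_of_mem_erase hmem⟩, hC.2⟩, rfl⟩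
  · rintro ⟨C, ⟨⟨hCφ, hCw⟩, hCnm⟩, rfl⟩
    refine ⟨⟨C, ⟨hCφ, hCnm⟩, rfl⟩, Finset.mem_erase.2 ⟨?_, hCw⟩⟩
    intro h
    simp at h
/-- If `Q_i` of an encoding is a single binary clause `{¬x_i, e}` with `e.1 ≠ i`,
then there is a strictly smaller encoding on the same inputs. -/
lemma rightcase_of_singleQ {m : ℕ} {ψ : CNF} (hGP : GenPEncoding m ψ) (hm : 3 ≤ m)
    {j : ℕ} (hj : j < m) (e : Lit) (hej : e.1 ≠ j)
    (hQ : Qset ψ j = {({((j : Var), false), e} : Clause)}) :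
    ∃ ψ' : CNF, GenPEncoding m ψ' ∧ ψ'.card + 1 ≤ ψ.card := by
  rcases e with ⟨u, c⟩
  simp only at hej
  by_cases hu : u < m
  · exfalso
    have hCψ : ({((j : Var), false), (u, c)} : Clause) ∈ ψ := by
      have : ({((j : Var), false), (u, c)} : Clause) ∈ Qset ψ j := by
        rw [hQ]; exact Finset.mem_singleton_self _
      exact (Finset.mem_filter.1 this).1
    cases c
    · exact no_neg_partner_singleQ hGP hm hj hu (Ne.symm hej) hQ
    · exact no_pos_partner hGP hj hu (Ne.symm hej) hCψ
  · exact subst_smaller hGP hj u c hu hQ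

lemma swap_inv (i m : ℕ) : ∀ x, Equiv.swap i m (Equiv.swap i m x) = x :=
  fun x => Equiv.swap_apply_self i m x

lemma swap_maps {n : ℕ} (i : ℕ) (hi : i < n) (hn : 1 ≤ n) :
    ∀ k, k < n → Equiv.swap i (n - 1) k < n := by
  intro k hk
  rw [Equiv.swap_apply_def]
  split_ifs <;> omega

lemma swap_lt {n : ℕ} {i j : ℕ} (hi : i < n) (hj : j < n) (hij : j ≠ i) :
    Equiv.swap i (n - 1) j < n - 1 := by
  rw [Equiv.swap_apply_def]
  split_ifs <;> omega

/-- Restriction reduction: setting `x_i := 0` gives an `(n-1)`-encoding losing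
`|Q_i|` clauses. -/
lemma reduce_at {n : ℕ} {φ : CNF} (hGP : GenPEncoding n φ) (hn : 1 ≤ n)
    {i : ℕ} (hi : i < n) :
    ∃ ψ : CNF, GenPEncoding (n - 1) ψ ∧ ψ.card + (Qset φ i).card ≤ φ.card := by
  have hinv := swap_inv i (n - 1)
  have hmaps := swap_maps i hi hn
  have hGPρ : GenPEncoding n (relCNF (⇑(Equiv.swap i (n - 1))) φ) :=
    GP_relCNF hinv hmaps hGP
  have hGPρ' : GenPEncoding ((n - 1) + 1) (relCNF (⇑(Equiv.swap i (n - 1))) φ) := by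
    rw [show n - 1 + 1 = n from by omega]; exact hGPρ
  refine ⟨restrictLast (n - 1) (relCNF (⇑(Equiv.swap i (n - 1))) φ),
    GP_restrictLast hGPρ', ?_⟩
  have h1 := card_restrictLast (n - 1) (relCNF (⇑(Equiv.swap i (n - 1))) φ)
  have h2 : (Qset (relCNF (⇑(Equiv.swap i (n - 1))) φ) (n - 1)).card = (Qset φ i).card := by
    have h3 := Qset_relCNF hinv φ i
    rw [Equiv.swap_apply_left] at h3
    rw [h3]
    exact Finset.card_image_of_injective _ (relClause_inj hinv)
  have h4 := card_relCNF hinv (f := ⇑(Equiv.swap i (n - 1))) φ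
  omega
/-- Let `n ≥ 4` and let `φ` be a prime generalized P-encoding on `n` input
variables of minimum size among all generalized P-encodings on `n` input
variables. Then either there is a generalized P-encoding on `n` input variables
in regular form of the same size, or there is a generalized P-encoding on `n−1`
input variables with at least three fewer clauses. -/
theorem regular_form_reduction (n : ℕ) (hn : 4 ≤ n) (φ : CNF)
    (hprime : PrimeEncoding n φ)
    (hmin : ∀ ψ : CNF, GenPEncoding n ψ → φ.card ≤ ψ.card) :
    (∃ φ' : CNF, GenPEncoding n φ' ∧ RegularForm n φ' ∧ φ'.card = φ.card) ∨
    (∃ φ' : CNF, GenPEncoding (n - 1) φ' ∧ φ'.card + 3 ≤ φ.card) := by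
  have hGP := hprime.1
  by_cases hreg : RegularForm n φ
  · exact Or.inl ⟨φ, hGP, hreg, rfl⟩
  -- helper facts
  have posQ : ∀ k, k < n → 0 < (Qset φ k).card := fun k hk =>
    Finset.card_pos.2 (Qset_nonempty hGP (by omega) hk)
  have singleQ_false : ∀ k, k < n → (Qset φ k).card = 1 → False := by
    intro k hk hc1
    obtain ⟨C, hQ⟩ := Finset.card_eq_one.1 hc1
    have hCQ : C ∈ Qset φ k := by rw [hQ]; exact Finset.mem_singleton_self _
    obtain ⟨e, hCform, he⟩ := Qclause_structure hprime hmin (by omega) hk hCQ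
    rw [hCform] at hQ
    obtain ⟨ψ, hψGP, hc⟩ := rightcase_of_singleQ hGP (by omega) hk e he hQ
    have := hmin ψ hψGP
    omega
  have bigQ_right : ∀ k, k < n → 3 ≤ (Qset φ k).card →
      (∃ φ' : CNF, GenPEncoding (n - 1) φ' ∧ φ'.card + 3 ≤ φ.card) := by
    intro k hk h3
    obtain ⟨ψ, h1, h2⟩ := reduce_at hGP (by omega) hk
    exact ⟨ψ, h1, by omega⟩
  -- find a violating input variable
  rw [RegularForm] at hreg
  push_neg at hreg
  obtain ⟨i, hi, hviol⟩ := hreg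
  have hccases : (Qset φ i).card = 1 ∨ (Qset φ i).card = 2 ∨ 3 ≤ (Qset φ i).card := by
    have := posQ i hi; omega
  rcases hccases with hc | hA | hc
  · exact absurd hc (fun h => singleQ_false i hi h)
  · -- |Q_i| = 2
    have hCpart : ∀ C ∈ Qset φ i, C.card = 2 := by
      intro C hC
      obtain ⟨e, hCform, he⟩ := Qclause_structure hprime hmin (by omega) hi hC
      have hne : ((i : Var), false) ∉ ({e} : Clause) := by
        simp only [Finset.mem_singleton]
        intro h
        exact he (by rw [← h])
      rw [hCform, Finset.card_insert_of_notMem hne, Finset.card_singleton]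
    by_cases hB : ∀ C ∈ Qset φ i, ∀ l ∈ C, l.1 < n → l.1 = i
    · exact absurd (hviol hA hB) (by push_neg; exact hCpart)
    · push_neg at hB
      obtain ⟨C1, hC1Q, l, hlC1, hln, hlne⟩ := hB
      obtain ⟨e, hC1form, he1⟩ := Qclause_structure hprime hmin (by omega) hi hC1Q
      rcases e with ⟨j, eb⟩
      simp only at he1
      have hle : l = ((j : Var), eb) := by
        rw [hC1form] at hlC1
        rcases Finset.mem_insert.1 hlC1 with h | h
        · exact absurd (by rw [h]) hlne
        · exact Finset.mem_singleton.1 h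
      have hj : j < n := by rw [hle] at hln; exact hln
      have hC1φ : C1 ∈ φ := (Finset.mem_filter.1 hC1Q).1
      cases eb
      · -- C1 = {¬x_i, ¬x_j} : the interesting case
        -- analyze Q_j
        have hjcases : (Qset φ j).card = 1 ∨ (Qset φ j).card = 2 ∨ 3 ≤ (Qset φ j).card := by
          have := posQ j hj; omega
        rcases hjcases with hcj | hcj | hcj
        · exact absurd hcj (fun h => singleQ_false j hj h)
        · -- |Q_j| = 2 : main construction
          obtain ⟨a, b', hab, hQj⟩ := Finset.card_eq_two.1 hcj
          have hC1Qj : C1 ∈ Qset φ j := by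
            refine Finset.mem_filter.2 ⟨hC1φ, ?_⟩
            rw [hC1form]; simp
          have hex : ∃ C2', Qset φ j = {C1, C2'} ∧ C2' ≠ C1 := by
            rw [hQj] at hC1Qj
            rcases Finset.mem_insert.1 hC1Qj with rfl | h
            · exact ⟨b', hQj, Ne.symm hab⟩
            · have hb' : C1 = b' := Finset.mem_singleton.1 h
              subst hb'
              exact ⟨a, by rw [hQj, Finset.pair_comm], hab⟩
          obtain ⟨C2', hQjform, hC2ne⟩ := hex
          have hC2Q : C2' ∈ Qset φ j := by rw [hQjform]; simp
          have hC2φ : C2' ∈ φ := (Finset.mem_filter.1 hC2Q).1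
          obtain ⟨g, hC2form, hg_j⟩ := Qclause_structure hprime hmin (by omega) hj hC2Q
          have hgi : g.1 ≠ i := by
            intro hgi0
            rcases g with ⟨gv, gb⟩
            simp only at hgi0
            cases gb
            · apply hC2ne
              rw [hC2form, hC1form, hgi0, Finset.pair_comm]
            · have hC2φ' : ({((j : Var), false), ((i : Var), true)} : Clause) ∈ φ := by
                rw [← hgi0, ← hC2form]; exact hC2φ
              exact no_pos_partner hGP hj hi he1 hC2φ'
          -- the restricted and relabelled formula
          have hinv := swap_inv i (n - 1)
          have hmaps := swap_maps i hi (by omega)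
          have hGPρ : GenPEncoding ((n - 1) + 1) (relCNF (⇑(Equiv.swap i (n - 1))) φ) := by
            rw [show n - 1 + 1 = n from by omega]
            exact GP_relCNF hinv hmaps hGP
          have hGPψ := GP_restrictLast hGPρ
          have hcard2 : (restrictLast (n - 1) (relCNF (⇑(Equiv.swap i (n - 1))) φ)).card + 2
              ≤ φ.card := by
            have h1 := card_restrictLast (n - 1) (relCNF (⇑(Equiv.swap i (n - 1))) φ)
            have h3 := Qset_relCNF hinv φ i
            rw [Equiv.swap_apply_left] at h3
            have h2 : (Qset (relCNF (⇑(Equiv.swap i (n - 1))) φ) (n - 1)).card = 2 := by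
              rw [h3, Finset.card_image_of_injective _ (relClause_inj hinv), hA]
            have h4 := card_relCNF hinv (f := ⇑(Equiv.swap i (n - 1))) φ
            omega
          have hj'lt : Equiv.swap i (n - 1) j < n - 1 := swap_lt hi hj he1
          have hrel1 : relClause (⇑(Equiv.swap i (n - 1))) C1 =
              {(((n - 1 : ℕ) : Var), false), (Equiv.swap i (n - 1) j, false)} := by
            rw [hC1form]
            rw [relClause, Finset.image_insert, Finset.image_singleton]
            simp [Equiv.swap_apply_left]
          have hrel2 : relClause (⇑(Equiv.swap i (n - 1))) C2' =
              {((Equiv.swap i (n - 1) j : Var), false), (Equiv.swap i (n - 1) g.1, g.2)} := by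
            rw [hC2form]
            rw [relClause, Finset.image_insert, Finset.image_singleton]
          have hswapg : Equiv.swap i (n - 1) g.1 ≠ n - 1 := by
            intro h
            apply hgi
            have := congrArg (⇑(Equiv.swap i (n - 1))) h
            rw [hinv, Equiv.swap_apply_right] at this
            exact this
          have hQρ : Qset (relCNF (⇑(Equiv.swap i (n - 1))) φ) (Equiv.swap i (n - 1) j) =
              {relClause (⇑(Equiv.swap i (n - 1))) C1, relClause (⇑(Equiv.swap i (n - 1))) C2'} := by
            rw [Qset_relCNF hinv φ j, hQjform, Finset.image_insert, Finset.image_singleton]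
          have hQψ : Qset (restrictLast (n - 1) (relCNF (⇑(Equiv.swap i (n - 1))) φ))
              (Equiv.swap i (n - 1) j) =
              {({((Equiv.swap i (n - 1) j : Var), false),
                 (Equiv.swap i (n - 1) g.1, g.2)} : Clause)} := by
            rw [Qset_restrictLast, hQρ]
            have hp1 : ¬ (((n - 1 : ℕ) : Var), false) ∉ relClause (⇑(Equiv.swap i (n - 1))) C1 := by
              rw [hrel1]; simp
            have hp2 : (((n - 1 : ℕ) : Var), false) ∉ relClause (⇑(Equiv.swap i (n - 1))) C2' := by
              rw [hrel2]
              intro hmem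
              rcases Finset.mem_insert.1 hmem with h | h
              · have : (n - 1 : ℕ) = Equiv.swap i (n - 1) j := congrArg Prod.fst h
                omega
              · rw [Finset.mem_singleton] at h
                exact hswapg (congrArg Prod.fst h).symm
            rw [Finset.filter_insert, if_neg hp1, Finset.filter_singleton, if_pos hp2,
              Finset.image_singleton]
            congr 1
            rw [hrel2]
            apply Finset.erase_eq_of_notMem
            intro hmem
            rcases Finset.mem_insert.1 hmem with h | h
            · exact absurd (congrArg Prod.snd h) (by simp)
            · rw [Finset.mem_singleton] at h
              exact hswapg (congrArg Prod.fst h).symm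
          have hfgj : (Equiv.swap i (n - 1) g.1, g.2).1 ≠ Equiv.swap i (n - 1) j := by
            simp only
            intro h
            exact hg_j (f_inj hinv h)
          obtain ⟨ψ', hψ'GP, hc'⟩ := rightcase_of_singleQ hGPψ (by omega) hj'lt
            (Equiv.swap i (n - 1) g.1, g.2) hfgj hQψ
          exact Or.inr ⟨ψ', hψ'GP, by omega⟩
        · exact Or.inr (bigQ_right j hj hcj)
      · -- e = x_j positive : impossible
        have hC1φ' : ({((i : Var), false), ((j : Var), true)} : Clause) ∈ φ := by
          rw [← hC1form]; exact hC1φ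
        exact absurd hC1φ' (fun h => no_pos_partner hGP hi hj (Ne.symm he1) h)
  · exact Or.inr (bigQ_right i hi hc)
end

section
/- Let φ be a generalized P-encoding on n input variables in regular form. Then for all distinct i, j ∈ [n], the sets L_{φ,i} and L_{φ,j} are distinct. -/
/-- Let `φ` be a generalized P-encoding on `n` input variables in regular form.
Then for all distinct `i, j ∈ [n]`, the sets `L_{φ,i}` and `L_{φ,j}` are
distinct. -/
theorem distinct_edges (n : ℕ) (φ : CNF)
    (h : GenPEncoding n φ) (hreg : RegularForm n φ)
    (i j : ℕ) (hi : i < n) (hj : j < n) (hij : i ≠ j) :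
    Lset φ i ≠ Lset φ j := by
  intro heq
  obtain ⟨σ, hσi, hσ⟩ := h.1 i hi
  have hσj : σ j = false := by
    have hb := h.2 i hi j hj hij σ hσ
    cases hj' : σ j with
    | false => rfl
    | true => exact absurd ⟨hσi, hj'⟩ hb
  -- key fact: every e ∈ Lset φ j has variable distinct from j, and σ eval e = true
  have key : ∀ e ∈ Lset φ j, e.1 ≠ j ∧ Lit.eval σ e = true := by
    intro e he
    have hei : e ∈ Lset φ i := by rw [heq]; exact he
    have hCj : ({((j : Var), false), e} : Clause) ∈ Qset φ j :=
      Finset.mem_filter.2 ⟨he, by simp⟩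
    have hCi : ({((i : Var), false), e} : Clause) ∈ Qset φ i :=
      Finset.mem_filter.2 ⟨hei, by simp⟩
    have hvj := (hreg j hj).2.1 _ hCj e (by simp)
    have hvi := (hreg i hi).2.1 _ hCi e (by simp)
    have hen : ¬ e.1 < n := fun hlt => hij ((hvi hlt).symm.trans (hvj hlt))
    constructor
    · exact fun hej => hen (hej ▸ hj)
    · -- σ satisfies {¬x_i, e}, and σ i = true kills ¬x_i
      obtain ⟨l, hl, hleval⟩ := hσ _ hei
      rcases Finset.mem_insert.1 hl with rfl | hl
      · simp [Lit.eval, hσi] at hleval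
      · rw [Finset.mem_singleton.1 hl] at hleval; exact hleval
  -- flipped assignment
  set σ' : Var → Bool := Function.update σ j true with hσ'def
  have hσ'sat : CNF.sat σ' φ := by
    intro C hC
    obtain ⟨l, hl, hleval⟩ := hσ C hC
    by_cases hlj : l.1 = j
    · cases hpol : l.2 with
      | true =>
        -- σ l.1 = σ j = false, contradiction with hleval
        simp [Lit.eval, hpol, hlj, hσj] at hleval
      | false =>
        -- l = (j, false), so C ∈ Qset φ j
        have hlval : l = ((j : Var), false) := by
          rcases l with ⟨v, b⟩; simp_all
        have hCQ : C ∈ Qset φ j := Finset.mem_filter.2 ⟨hC, hlval ▸ hl⟩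
        have hcard := (hreg j hj).2.2 C hCQ
        obtain ⟨a, b, hab, hCab⟩ := Finset.card_eq_two.1 hcard
        have hjin : ((j : Var), false) ∈ C := hlval ▸ hl
        -- one of a, b is (j,false); let e be the other
        have : ∃ e, e ≠ ((j : Var), false) ∧ C = {((j : Var), false), e} := by
          rw [hCab] at hjin
          rcases Finset.mem_insert.1 hjin with rfl | hb
          · exact ⟨b, fun hh => hab hh.symm, by rw [hCab]⟩
          · have hbj := Finset.mem_singleton.1 hb
            exact ⟨a, hbj ▸ hab, by rw [hCab, hbj, Finset.pair_comm]⟩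
        obtain ⟨e, hene, hCe⟩ := this
        have heL : e ∈ Lset φ j := by
          show ({((j : Var), false), e} : Clause) ∈ φ
          rw [← hCe]; exact hC
        obtain ⟨hej, heval⟩ := key e heL
        refine ⟨e, ?_, ?_⟩
        · rw [hCe]; simp
        · have : σ' e.1 = σ e.1 := Function.update_of_ne hej _ _
          simpa [Lit.eval, this] using heval
    · refine ⟨l, hl, ?_⟩
      have : σ' l.1 = σ l.1 := Function.update_of_ne hlj _ _
      simpa [Lit.eval, this] using hleval
  have hb := h.2 i hi j hj hij σ' hσ'sat
  exact hb ⟨by simp [hσ'def, Function.update_of_ne hij, hσi],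
    by simp [hσ'def]⟩
end

section
/- Let φ be a generalized P-encoding on n input variables in regular form, and suppose there are pairwise distinct i, j, k ∈ [n] with L_{φ,i} = {ℓ, ℓ_1}, L_{φ,j} = {ℓ, ℓ_2}, and L_{φ,k} = {ℓ, ℓ_3} for some literals ℓ, ℓ_1, ℓ_2, ℓ_3 over the auxiliary variables. Then the variables var(ℓ_1), var(ℓ_2), and var(ℓ_3) are pairwise distinct. -/
lemma eval_forced (φ : CNF) (σ : Var → Bool) (hσ : CNF.sat σ φ) (p : ℕ)
    (hp : σ p = true) (a : Lit) (ha : a ∈ Lset φ p) : Lit.eval σ a = true := by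
  obtain ⟨l, hl, hev⟩ := hσ _ ha
  rcases Finset.mem_insert.mp hl with rfl | hl
  · simp [Lit.eval, hp] at hev
  · rwa [Finset.mem_singleton.mp hl] at hev

lemma eval_flip_ne (σ : Var → Bool) (m : ℕ) (l : Lit) (hne : l.1 ≠ m) :
    Lit.eval (fun v => if v = m then true else σ v) l = Lit.eval σ l := by
  simp [Lit.eval, hne]

lemma flip_sat (n : ℕ) (φ : CNF) (hreg : RegularForm n φ) (m : ℕ) (hm : m < n)
    (ℓ e : Lit) (hl : n ≤ ℓ.1) (he : n ≤ e.1) (hL : Lset φ m = {ℓ, e})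
    (σ : Var → Bool) (hσ : CNF.sat σ φ) (hℓ : Lit.eval σ ℓ = true)
    (hev : Lit.eval σ e = true) :
    CNF.sat (fun v => if v = m then true else σ v) φ := by
  intro C hC
  obtain ⟨l, hlC, hevl⟩ := hσ C hC
  by_cases hlm : l.1 = m
  · rcases Bool.eq_false_or_eq_true l.2 with hl2 | hl2
    · -- l = (m, true): satisfied by the flip
      refine ⟨l, hlC, ?_⟩
      simp [Lit.eval, hl2, hlm]
    · -- l = (m, false), so C ∈ Qset φ m
      have hlval : l = ((m : Var), false) := Prod.ext hlm hl2
      have hCQ : C ∈ Qset φ m := Finset.mem_filter.mpr ⟨hC, hlval ▸ hlC⟩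
      have hcard : C.card = 2 := (hreg m hm).2.2 C hCQ
      obtain ⟨x, y, hxy, hCeq⟩ := Finset.card_eq_two.mp hcard
      -- the other element of C
      have hmem : ((m : Var), false) ∈ C := hlval ▸ hlC
      have : ∃ e' : Lit, e' ∈ C ∧ C = {((m : Var), false), e'} := by
        rw [hCeq] at hmem ⊢
        rcases Finset.mem_insert.mp hmem with rfl | hmem
        · exact ⟨y, by simp, rfl⟩
        · have hy := Finset.mem_singleton.mp hmem
          exact ⟨x, by simp, by rw [hy, Finset.pair_comm]⟩
      obtain ⟨e', he'C, hCe'⟩ := this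
      have he'L : e' ∈ Lset φ m := by
        show ({((m : Var), false), e'} : Clause) ∈ φ
        rwa [← hCe']
      rw [hL] at he'L
      rcases he'L with rfl | he'L
      · refine ⟨e', he'C, ?_⟩
        rw [eval_flip_ne σ m e' (Nat.ne_of_gt (lt_of_lt_of_le hm hl))]
        exact hℓ
      · rcases Set.mem_singleton_iff.mp he'L with rfl
        refine ⟨e', he'C, ?_⟩
        rw [eval_flip_ne σ m e' (Nat.ne_of_gt (lt_of_lt_of_le hm he))]
        exact hev
  · exact ⟨l, hlC, by rw [eval_flip_ne σ m l hlm]; exact hevl⟩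

lemma key_ne (n : ℕ) (φ : CNF) (h : GenPEncoding n φ) (hreg : RegularForm n φ)
    (p q r : ℕ) (hp : p < n) (hq : q < n) (hr : r < n)
    (hpq : p ≠ q) (hpr : p ≠ r) (hqr : q ≠ r)
    (ℓ a b c : Lit) (hlx : n ≤ ℓ.1) (hax : n ≤ a.1) (hbx : n ≤ b.1) (hcx : n ≤ c.1)
    (hpL : Lset φ p = {ℓ, a}) (hqL : Lset φ q = {ℓ, b}) (hrL : Lset φ r = {ℓ, c}) :
    a.1 ≠ b.1 := by
  intro hv
  have hla : ℓ ∈ Lset φ p := hpL ▸ Set.mem_insert _ _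
  have haa : a ∈ Lset φ p := hpL ▸ Set.mem_insert_iff.mpr (Or.inr rfl)
  have hlb : ℓ ∈ Lset φ q := hqL ▸ Set.mem_insert _ _
  have hbb : b ∈ Lset φ q := hqL ▸ Set.mem_insert_iff.mpr (Or.inr rfl)
  have hlc : ℓ ∈ Lset φ r := hrL ▸ Set.mem_insert _ _
  have hcc : c ∈ Lset φ r := hrL ▸ Set.mem_insert_iff.mpr (Or.inr rfl)
  by_cases hpol : a.2 = b.2
  · -- a = b : take σ with x_p true, flip x_q
    have hab : a = b := Prod.ext hv hpol
    obtain ⟨σ, hσp, hσ⟩ := h.1 p hp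
    have heℓ : Lit.eval σ ℓ = true := eval_forced φ σ hσ p hσp ℓ hla
    have hea : Lit.eval σ a = true := eval_forced φ σ hσ p hσp a haa
    have hsat' := flip_sat n φ hreg q hq ℓ b hlx hbx hqL σ hσ heℓ (hab ▸ hea)
    exact h.2 p hp q hq hpq _ hsat'
      ⟨by simpa [hpq] using hσp, by simp⟩
  · -- a = ¬b : take σ with x_r true; one of a, b is true under σ
    obtain ⟨σ, hσr, hσ⟩ := h.1 r hr
    have heℓ : Lit.eval σ ℓ = true := eval_forced φ σ hσ r hσr ℓ hlc
    have hor : Lit.eval σ a = true ∨ Lit.eval σ b = true := by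
      simp only [Lit.eval, hv]
      rcases Bool.eq_false_or_eq_true a.2 with h2 | h2 <;>
        rcases Bool.eq_false_or_eq_true (σ b.1) with h3 | h3 <;>
          simp_all
    rcases hor with hea | heb
    · have hsat' := flip_sat n φ hreg p hp ℓ a hlx hax hpL σ hσ heℓ hea
      exact h.2 p hp r hr hpr _ hsat'
        ⟨by simp, by simpa [Ne.symm hpr] using hσr⟩
    · have hsat' := flip_sat n φ hreg q hq ℓ b hlx hbx hqL σ hσ heℓ heb
      exact h.2 q hq r hr hqr _ hsat'
        ⟨by simp, by simpa [Ne.symm hqr] using hσr⟩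

/-- Let `φ` be a generalized P-encoding on `n` input variables in regular form,
and suppose there are pairwise distinct `i, j, k ∈ [n]` with
`L_{φ,i} = {ℓ, ℓ₁}`, `L_{φ,j} = {ℓ, ℓ₂}`, `L_{φ,k} = {ℓ, ℓ₃}` for literals over
the auxiliary variables (variables `≥ n`). Then the variables of `ℓ₁`, `ℓ₂`,
`ℓ₃` are pairwise distinct. -/
theorem pairwise_distinct_vars (n : ℕ) (φ : CNF)
    (h : GenPEncoding n φ) (hreg : RegularForm n φ)
    (i j k : ℕ) (hi : i < n) (hj : j < n) (hk : k < n)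
    (hij : i ≠ j) (hik : i ≠ k) (hjk : j ≠ k)
    (ℓ ℓ₁ ℓ₂ ℓ₃ : Lit)
    (haux : n ≤ ℓ.1 ∧ n ≤ ℓ₁.1 ∧ n ≤ ℓ₂.1 ∧ n ≤ ℓ₃.1)
    (h1 : Lset φ i = {ℓ, ℓ₁}) (h2 : Lset φ j = {ℓ, ℓ₂}) (h3 : Lset φ k = {ℓ, ℓ₃}) :
    ℓ₁.1 ≠ ℓ₂.1 ∧ ℓ₁.1 ≠ ℓ₃.1 ∧ ℓ₂.1 ≠ ℓ₃.1 := by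
  obtain ⟨hl, h1x, h2x, h3x⟩ := haux
  exact ⟨key_ne n φ h hreg i j k hi hj hk hij hik hjk ℓ ℓ₁ ℓ₂ ℓ₃ hl h1x h2x h3x h1 h2 h3,
    key_ne n φ h hreg i k j hi hk hj hik hij (Ne.symm hjk) ℓ ℓ₁ ℓ₃ ℓ₂ hl h1x h3x h2x h1 h3 h2,
    key_ne n φ h hreg j k i hj hk hi hjk (Ne.symm hij) (Ne.symm hik) ℓ ℓ₂ ℓ₃ ℓ₁ hl h2x h3x h1x h2 h3 h1⟩
end

section
/- Let φ be a generalized P-encoding on n input variables in regular form, let ψ be the CNF formula obtained from φ by deleting all clauses belonging to some Q_{φ,k} (k ∈ [n]), and let i, j ∈ [n] be distinct with L_{φ,i} = {ℓ_{i,1}, ℓ_{i,2}} and L_{φ,j} = {ℓ_{j,1}, ℓ_{j,2}}. Then the formula ψ|_{τ_i} ∧ ℓ_{i,1} ∧ ℓ_{i,2} ∧ ℓ_{j,1} ∧ ℓ_{j,2} is unsatisfiable. -/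
/-- Evaluation of a literal under a partial assignment. -/
def Lit.evalP (τ : Var → Option Bool) (l : Lit) : Option Bool :=
  (τ l.1).map (fun b => if l.2 then b else !b)

/-- The restriction `φ|_τ`: delete every clause satisfied by the partial
assignment `τ`, and from each remaining clause delete every literal falsified
by `τ`. -/
noncomputable def CNF.restrict (φ : CNF) (τ : Var → Option Bool) : CNF := by
  classical
  exact (φ.filter (fun C => ¬ ∃ l ∈ C, Lit.evalP τ l = some true)).image
    (fun C => C.filter (fun l => ¬ Lit.evalP τ l = some false))

/-- The partial assignment `τ_i` setting input variable `x_i` to `⊤`, every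
other input variable (those `< n`) to `⊥`, and leaving auxiliary variables
unassigned. -/
def tauAssign (n i : ℕ) : Var → Option Bool :=
  fun v => if v < n then some (decide (v = i)) else none

/-- Let `φ` be a generalized P-encoding on `n` input variables in regular form,
let `ψ` be obtained from `φ` by deleting all clauses belonging to some
`Q_{φ,k}` (`k ∈ [n]`), and let `i ≠ j` with `L_{φ,i} = {ℓ_{i,1}, ℓ_{i,2}}` and
`L_{φ,j} = {ℓ_{j,1}, ℓ_{j,2}}`. Then `ψ|_{τ_i} ∧ ℓ_{i,1} ∧ ℓ_{i,2} ∧ ℓ_{j,1} ∧ ℓ_{j,2}`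
is unsatisfiable. -/
theorem two_edge_conflict (n : ℕ) (φ : CNF)
    (h : GenPEncoding n φ) (hreg : RegularForm n φ)
    (ψ : CNF) (hψ : ψ = φ.filter (fun C => ∀ k < n, ((k : Var), false) ∉ C))
    (i j : ℕ) (hi : i < n) (hj : j < n) (hij : i ≠ j)
    (li1 li2 lj1 lj2 : Lit)
    (hLi : Lset φ i = {li1, li2}) (hLj : Lset φ j = {lj1, lj2}) :
    ¬ ∃ σ : Var → Bool,
      CNF.sat σ (CNF.restrict ψ (tauAssign n i) ∪
        ({{li1}, {li2}, {lj1}, {lj2}} : CNF)) := by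
  classical
  rintro ⟨σ, hsat⟩
  -- satisfaction of the four unit clauses
  have hunit : ∀ l : Lit, ({l} : Clause) ∈ ({{li1}, {li2}, {lj1}, {lj2}} : CNF) →
      Lit.eval σ l = true := by
    intro l hl
    have hm : ({l} : Clause) ∈ (CNF.restrict ψ (tauAssign n i) ∪
        ({{li1}, {li2}, {lj1}, {lj2}} : CNF)) := Finset.mem_union_right _ hl
    obtain ⟨l', hl', he⟩ := hsat _ hm
    rw [Finset.mem_singleton] at hl'
    subst hl'; exact he
  have h1 : Lit.eval σ li1 = true := hunit li1 (by simp)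
  have h2 : Lit.eval σ li2 = true := hunit li2 (by simp)
  have h3 : Lit.eval σ lj1 = true := hunit lj1 (by simp)
  have h4 : Lit.eval σ lj2 = true := hunit lj2 (by simp)
  have hres : ∀ C ∈ CNF.restrict ψ (tauAssign n i), Clause.sat σ C :=
    fun C hC => hsat C (Finset.mem_union_left _ hC)
  -- the total assignment setting x_i and x_j true, other inputs false
  set σ' : Var → Bool := fun v => if v < n then decide (v = i ∨ v = j) else σ v with hσ'
  have hσ'i : σ' i = true := by simp [hσ', hi]
  have hσ'j : σ' j = true := by simp [hσ', hj]
  -- key lemma: clauses containing ¬x_k for k ∈ {i,j} are satisfied by σ'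
  have key : ∀ k, k < n → ∀ a b : Lit, Lset φ k = {a, b} →
      Lit.eval σ a = true → Lit.eval σ b = true → σ' k = true →
      ∀ C ∈ φ, ((k : Var), false) ∈ C → Clause.sat σ' C := by
    intro k hk a b hL ha hb hσk C hC hmem
    have hQ : C ∈ Qset φ k := Finset.mem_filter.mpr ⟨hC, hmem⟩
    obtain ⟨hcard2, hvar, hsize⟩ := hreg k hk
    have hc2 : C.card = 2 := hsize C hQ
    have hc1 : (C.erase ((k : Var), false)).card = 1 := by
      rw [Finset.card_erase_of_mem hmem, hc2]
    obtain ⟨e, he⟩ := Finset.card_eq_one.mp hc1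
    have heE : e ∈ C.erase ((k : Var), false) := by
      rw [he]; exact Finset.mem_singleton_self e
    have heC : e ∈ C := Finset.mem_of_mem_erase heE
    have hene : e ≠ ((k : Var), false) := Finset.ne_of_mem_erase heE
    have hCeq : C = {((k : Var), false), e} := by
      rw [← Finset.insert_erase hmem, he]
    have heL : e ∈ Lset φ k := by
      show ({((k : Var), false), e} : Clause) ∈ φ
      rw [← hCeq]; exact hC
    have heab : e = a ∨ e = b := by rw [hL] at heL; exact heL
    have hevσ : Lit.eval σ e = true := by
      rcases heab with h' | h' <;> subst h' <;> assumption
    refine ⟨e, heC, ?_⟩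
    by_cases hlt : e.1 < n
    · have hek : e.1 = k := hvar C hQ e heC hlt
      have hpos : e.2 = true := by
        by_contra h2'
        exact hene (Prod.ext hek (by simpa using h2'))
      have : e = ((k : Var), true) := Prod.ext hek hpos
      rw [this]
      simpa [Lit.eval] using hσk
    · have hagree : σ' e.1 = σ e.1 := by simp [hσ', hlt]
      simp only [Lit.eval, hagree]
      simpa [Lit.eval] using hevσ
  -- σ' satisfies φ
  have hφsat : CNF.sat σ' φ := by
    intro C hC
    by_cases hQ : ∃ k, k < n ∧ ((k : Var), false) ∈ C
    · obtain ⟨k, hk, hmem⟩ := hQ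
      by_cases hki : k = i
      · subst hki; exact key k hk li1 li2 hLi h1 h2 hσ'i C hC hmem
      by_cases hkj : k = j
      · subst hkj; exact key k hk lj1 lj2 hLj h3 h4 hσ'j C hC hmem
      · refine ⟨((k : Var), false), hmem, ?_⟩
        simp [Lit.eval, hσ', hk, hki, hkj]
    · -- C ∈ ψ
      have hCψ : C ∈ ψ := by
        rw [hψ]
        refine Finset.mem_filter.mpr ⟨hC, ?_⟩
        intro k hk hmem
        exact hQ ⟨k, hk, hmem⟩
      have hnofalse : ∀ k < n, ((k : Var), false) ∉ C := by
        intro k hk hmem; exact hQ ⟨k, hk, hmem⟩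
      by_cases hsatτ : ∃ l ∈ C, Lit.evalP (tauAssign n i) l = some true
      · obtain ⟨l, hl, hev⟩ := hsatτ
        have hlt : l.1 < n := by
          by_contra hge
          simp [Lit.evalP, tauAssign, hge] at hev
        have hl2 : l.2 = true := by
          by_contra h2'
          have hl2' : l.2 = false := by simpa using h2'
          have : l = (l.1, false) := Prod.ext rfl hl2'
          exact hnofalse l.1 hlt (this ▸ hl)
        have hli : l.1 = i := by
          simp [Lit.evalP, tauAssign, hlt, hl2] at hev
          exact hev
        refine ⟨l, hl, ?_⟩
        have : l = ((i : Var), true) := Prod.ext hli hl2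
        rw [this]
        simpa [Lit.eval] using hσ'i
      · have hCfilt : C ∈ ψ.filter
            (fun C => ¬ ∃ l ∈ C, Lit.evalP (tauAssign n i) l = some true) :=
          Finset.mem_filter.mpr ⟨hCψ, hsatτ⟩
        have hres' : C.filter (fun l => ¬ Lit.evalP (tauAssign n i) l = some false)
            ∈ CNF.restrict ψ (tauAssign n i) := by
          unfold CNF.restrict
          exact Finset.mem_image_of_mem _ hCfilt
        obtain ⟨l, hl, hev⟩ := hres _ hres'
        have hlC : l ∈ C := (Finset.mem_filter.mp hl).1
        have hnf : ¬ Lit.evalP (tauAssign n i) l = some false :=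
          (Finset.mem_filter.mp hl).2
        have hge : ¬ l.1 < n := by
          intro hlt
          have hevP : Lit.evalP (tauAssign n i) l =
              some (if l.2 then decide (l.1 = i) else !(decide (l.1 = i))) := by
            simp [Lit.evalP, tauAssign, hlt]
          rcases Bool.eq_false_or_eq_true
              (if l.2 then decide (l.1 = i) else !(decide (l.1 = i))) with hb | hb
          · exact hsatτ ⟨l, hlC, by rw [hevP, hb]⟩
          · exact hnf (by rw [hevP, hb])
        refine ⟨l, hlC, ?_⟩
        have hagree : σ' l.1 = σ l.1 := by simp [hσ', hge]
        simp only [Lit.eval, hagree]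
        simpa [Lit.eval] using hev
  exact h.2 i hi j hj hij σ' hφsat ⟨hσ'i, hσ'j⟩
end
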